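/- arXiv:2502.14766 — 3 statements merged into one kernel-verified Lean document; each statement's English description precedes it below -/
import Mathlib

section
/- Let T > 0 and let k_y ∈ ℝ, L_f > 0, L_v ≥ 0 satisfy k_y + L_f ≥ 0. Then there exists a constant C > 0, depending only on k_y, L_f, L_v and T, with the following property: for every integer N ≥ 1, setting h := T/N, if h·(2k_y + 2L_f) ≤ 1/2, then for any two solutions (Y¹, Z¹) with drivers (f¹_n) and (Y², Z²) with drivers (f²_n) of the generic discrete scheme whose driver differences satisfy the driver-difference assumption with parameters k_y, L_f, L_v and nonnegative reals (ε_n)_{0≤n<N}, one has max_{0≤n≤N} E[(δY_n)²] + Σ_{n=0}^{N−1} h·E[|δZ_n|²] ≤ C·( E[(δY_N)²] + max_{0≤n<N} ε_n ). -/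
open MeasureTheory Finset Filter

noncomputable section

/-- The Brownian-type increments `ΔW_n : Ω → ℝ^d` are `𝒢_{n+1}`-measurable, have
square-integrable components, conditional mean zero and conditional covariance `h·I`. -/
def IncrementsOK {Ω : Type} [MeasurableSpace Ω] (P : Measure Ω) (N d : ℕ) (h : ℝ)
    (𝒢 : Filtration ℕ (inferInstance : MeasurableSpace Ω))
    (ΔW : ℕ → Ω → Fin d → ℝ) : Prop :=
  ∀ n < N,
    (∀ i, StronglyMeasurable[𝒢 (n + 1)] (fun ω => ΔW n ω i)) ∧
    (∀ i, MemLp (fun ω => ΔW n ω i) 2 P) ∧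
    (∀ i, P[(fun ω => ΔW n ω i) | 𝒢 n] =ᵐ[P] 0) ∧
    (∀ i j, P[(fun ω => ΔW n ω i * ΔW n ω j) | 𝒢 n]
        =ᵐ[P] fun _ => if i = j then h else 0)

/-- `(Y, Z)` solves the generic discrete scheme with driver terms `f`:
each `Y_n` is square-integrable and `𝒢_n`-measurable, each `f_n` is square-integrable and
`𝒢_n`-measurable, and almost surely `Y_n = E[Y_{n+1} | 𝒢_n] + h·f_n` and
`Z_nⁱ = h⁻¹·E[Y_{n+1}·ΔW_nⁱ | 𝒢_n]` for all `n < N`. -/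
def SolvesScheme {Ω : Type} [MeasurableSpace Ω] (P : Measure Ω) (N d : ℕ) (h : ℝ)
    (𝒢 : Filtration ℕ (inferInstance : MeasurableSpace Ω))
    (ΔW : ℕ → Ω → Fin d → ℝ)
    (Y : ℕ → Ω → ℝ) (Z : ℕ → Ω → Fin d → ℝ) (f : ℕ → Ω → ℝ) : Prop :=
  (∀ n ≤ N, MemLp (Y n) 2 P) ∧
  (∀ n ≤ N, StronglyMeasurable[𝒢 n] (Y n)) ∧
  (∀ n < N, MemLp (f n) 2 P) ∧
  (∀ n < N, StronglyMeasurable[𝒢 n] (f n)) ∧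
  (∀ n < N, Y n =ᵐ[P] fun ω => (P[Y (n + 1) | 𝒢 n]) ω + h * f n ω) ∧
  (∀ n < N, ∀ i, (fun ω => Z n ω i)
      =ᵐ[P] fun ω => h⁻¹ * (P[(fun ω' => Y (n + 1) ω' * ΔW n ω' i) | 𝒢 n]) ω)

/-- The driver-difference assumption with parameters `k_y, L_f, L_v` and nonnegative
reals `ε_n`: for each `n < N` the difference of the drivers splits as `φ_n + ψ_n` with
`E[φ_n·δY_n] ≤ k_y·E[(δY_n)²]` and `E[ψ_n²] ≤ L_v·ε_n + L_f·E[|δZ_n|²]`. -/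
def DriverDiff {Ω : Type} [MeasurableSpace Ω] (P : Measure Ω) (N d : ℕ)
    (𝒢 : Filtration ℕ (inferInstance : MeasurableSpace Ω))
    (k_y L_f L_v : ℝ) (ε : ℕ → ℝ)
    (Y1 Y2 : ℕ → Ω → ℝ) (Z1 Z2 : ℕ → Ω → Fin d → ℝ) (f1 f2 : ℕ → Ω → ℝ) : Prop :=
  ∀ n < N, ∃ φ ψ : Ω → ℝ,
    StronglyMeasurable[𝒢 n] φ ∧ StronglyMeasurable[𝒢 n] ψ ∧
    MemLp φ 2 P ∧ MemLp ψ 2 P ∧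
    (fun ω => f1 n ω - f2 n ω) =ᵐ[P] (fun ω => φ ω + ψ ω) ∧
    (∫ ω, φ ω * (Y1 n ω - Y2 n ω) ∂P) ≤ k_y * ∫ ω, (Y1 n ω - Y2 n ω) ^ 2 ∂P ∧
    (∫ ω, (ψ ω) ^ 2 ∂P)
      ≤ L_v * ε n + L_f * ∫ ω, (∑ i, (Z1 n ω i - Z2 n ω i) ^ 2) ∂P

lemma int_mul_L2 {Ω : Type} {m0 : MeasurableSpace Ω} {P : Measure Ω} {f g : Ω → ℝ}
    (hf : MemLp f 2 P) (hg : MemLp g 2 P) :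
    Integrable (fun ω => f ω * g ω) P := by
  have h := hg.smul (E := ℝ) (𝕜 := ℝ) hf (p := 2) (q := 2) (r := 1)
  rw [← memLp_one_iff_integrable]
  exact h

lemma integral_mul_condexp {Ω : Type} {m0 : MeasurableSpace Ω} (P : Measure Ω)
    [IsProbabilityMeasure P] {m : MeasurableSpace Ω} (hm : m ≤ m0) {b X : Ω → ℝ}
    (hb : StronglyMeasurable[m] b) (hbX : Integrable (fun ω => b ω * X ω) P)
    (hX : Integrable X P) :
    ∫ ω, b ω * X ω ∂P = ∫ ω, b ω * (P[X|m]) ω ∂P := by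
  have h1 : ∫ ω, b ω * X ω ∂P = ∫ ω, (P[fun ω => b ω * X ω|m]) ω ∂P :=
    (integral_condExp hm).symm
  rw [h1]
  refine integral_congr_ae ?_
  have := condExp_mul_of_stronglyMeasurable_left (μ := P) hb (g := X) hbX hX
  filter_upwards [this] with ω hω
  exact hω

lemma clamp_sq (x M : ℝ) (hM : 0 ≤ M) :
    (max (-M) (min x M)) ^ 2 = min (x ^ 2) (M ^ 2) := by
  rcases le_total x (-M) with h1 | h1
  · rw [min_eq_left (h1.trans (by linarith)), max_eq_left h1,
      min_eq_right (by nlinarith)]; ring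
  · rcases le_total x M with h2 | h2
    · rw [min_eq_left h2, max_eq_right h1, min_eq_left (by nlinarith)]
    · rw [min_eq_right h2, max_eq_right (by linarith), min_eq_right (by nlinarith)]

lemma clamp_mul (x M : ℝ) (hM : 0 ≤ M) :
    (max (-M) (min x M)) ^ 2 ≤ x * (max (-M) (min x M)) := by
  rcases le_total x (-M) with h1 | h1
  · rw [min_eq_left (h1.trans (by linarith)), max_eq_left h1]; nlinarith
  · rcases le_total x M with h2 | h2
    · rw [min_eq_left h2, max_eq_right h1]; nlinarith
    · rw [min_eq_right h2, max_eq_right (by linarith)]; nlinarith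

lemma clamp_abs (x M : ℝ) (hM : 0 ≤ M) : |max (-M) (min x M)| ≤ M := by
  rw [abs_le]
  constructor
  · exact le_max_left _ _
  · exact max_le (by linarith) (min_le_right _ _)
/-- Monotone convergence with a uniform integral bound. -/
lemma integrable_and_le_of_monotone {Ω : Type} {m0 : MeasurableSpace Ω} {P : Measure Ω}
    {F : ℕ → Ω → ℝ} {G : Ω → ℝ} {B : ℝ}
    (hFint : ∀ M, Integrable (F M) P) (hF0 : ∀ M ω, 0 ≤ F M ω)
    (hmono : ∀ ω, Monotone fun M => F M ω)
    (htend : ∀ ω, Tendsto (fun M => F M ω) atTop (nhds (G ω)))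
    (hGmeas : AEStronglyMeasurable G P)
    (hFB : ∀ M, ∫ ω, F M ω ∂P ≤ B) :
    Integrable G P ∧ ∫ ω, G ω ∂P ≤ B := by
  have hG0 : ∀ ω, 0 ≤ G ω := fun ω =>
    ge_of_tendsto (htend ω) (Eventually.of_forall fun M => hF0 M ω)
  have hB0 : 0 ≤ B := le_trans (integral_nonneg (hF0 0)) (hFB 0)
  have hkey : Tendsto (fun M => ∫⁻ ω, ENNReal.ofReal (F M ω) ∂P) atTop
      (nhds (∫⁻ ω, ENNReal.ofReal (G ω) ∂P)) := by
    refine lintegral_tendsto_of_tendsto_of_monotone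
      (fun M => ((hFint M).aestronglyMeasurable.aemeasurable).ennreal_ofReal)
      (Eventually.of_forall fun ω => fun a b hab => ENNReal.ofReal_le_ofReal (hmono ω hab))
      (Eventually.of_forall fun ω => ENNReal.tendsto_ofReal (htend ω))
  have heq : ∀ M, ∫⁻ ω, ENNReal.ofReal (F M ω) ∂P = ENNReal.ofReal (∫ ω, F M ω ∂P) :=
    fun M => (ofReal_integral_eq_lintegral_ofReal (hFint M)
      (Eventually.of_forall (hF0 M))).symm
  have hle : ∫⁻ ω, ENNReal.ofReal (G ω) ∂P ≤ ENNReal.ofReal B := by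
    refine le_of_tendsto hkey (Eventually.of_forall fun M => ?_)
    rw [heq M]; exact ENNReal.ofReal_le_ofReal (hFB M)
  have hGint : Integrable G P := by
    refine ⟨hGmeas, ?_⟩
    rw [hasFiniteIntegral_iff_norm]
    have : ∫⁻ ω, ENNReal.ofReal ‖G ω‖ ∂P = ∫⁻ ω, ENNReal.ofReal (G ω) ∂P := by
      refine lintegral_congr fun ω => by rw [Real.norm_of_nonneg (hG0 ω)]
    rw [this]
    exact lt_of_le_of_lt hle ENNReal.ofReal_lt_top
  refine ⟨hGint, ?_⟩
  rw [integral_eq_lintegral_of_nonneg_ae (Eventually.of_forall hG0) hGmeas]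
  calc (∫⁻ ω, ENNReal.ofReal (G ω) ∂P).toReal
      ≤ (ENNReal.ofReal B).toReal := ENNReal.toReal_mono ENNReal.ofReal_ne_top hle
    _ = B := ENNReal.toReal_ofReal hB0

lemma step_estimate {Ω : Type} {m0 : MeasurableSpace Ω} (P : Measure Ω)
    [IsProbabilityMeasure P] {m : MeasurableSpace Ω} (hm : m ≤ m0)
    {h : ℝ} (hh : 0 < h) {d : ℕ} {W : Ω → Fin d → ℝ}
    (hW2 : ∀ i, MemLp (fun ω => W ω i) 2 P)
    (hW0 : ∀ i, P[(fun ω => W ω i)|m] =ᵐ[P] 0)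
    (hWcov : ∀ i j, P[(fun ω => W ω i * W ω j)|m] =ᵐ[P] fun _ => if i = j then h else 0)
    {U G : Ω → ℝ} (hU2 : MemLp U 2 P) (hG2 : MemLp G 2 P)
    (hGmeas : StronglyMeasurable[m] G)
    (hGce : P[U|m] =ᵐ[P] G)
    {g : Fin d → Ω → ℝ}
    (hgmeas : ∀ i, StronglyMeasurable[m] (g i))
    (hgint : ∀ i, Integrable (g i) P)
    (hgce : ∀ i, P[(fun ω => U ω * W ω i)|m] =ᵐ[P] fun ω => h * g i ω) :
    Integrable (fun ω => ∑ i, (g i ω) ^ 2) P ∧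
      h * ∫ ω, (∑ i, (g i ω) ^ 2) ∂P ≤ (∫ ω, (U ω) ^ 2 ∂P) - ∫ ω, (G ω) ^ 2 ∂P := by
  -- the bound for truncation level M
  have main : ∀ M : ℕ,
      h * ∫ ω, (∑ i, min ((g i ω) ^ 2) ((M : ℝ) ^ 2)) ∂P
        ≤ (∫ ω, (U ω) ^ 2 ∂P) - ∫ ω, (G ω) ^ 2 ∂P := by
    intro M
    set Mr : ℝ := (M : ℝ) with hMr
    have hMr0 : (0:ℝ) ≤ Mr := Nat.cast_nonneg M
    set b : Fin d → Ω → ℝ := fun i ω => max (-Mr) (min (g i ω) Mr) with hbdef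
    have hbmeas : ∀ i, StronglyMeasurable[m] (b i) := fun i =>
      stronglyMeasurable_const.sup ((hgmeas i).inf stronglyMeasurable_const)
    have hbabs : ∀ i ω, |b i ω| ≤ Mr := fun i ω => clamp_abs _ _ hMr0
    have hbnorm : ∀ i, ∀ ω, ‖b i ω‖ ≤ Mr := fun i ω => hbabs i ω
    have hbsm0 : ∀ i, AEStronglyMeasurable[m0] (b i) P :=
      fun i => ((hbmeas i).mono hm).aestronglyMeasurable
    have hbtop : ∀ i, MemLp (b i) ⊤ P := fun i =>
      memLp_top_of_bound (hbsm0 i) Mr (Eventually.of_forall (hbnorm i))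
    have hbW2 : ∀ i, MemLp (fun ω => b i ω * W ω i) 2 P := by
      intro i
      have := (hW2 i).smul (hbtop i) (r := 2)
      exact this
    -- (I1) cross term
    have I1 : ∀ i, ∫ ω, (U ω - G ω) * (b i ω * W ω i) ∂P
        = h * ∫ ω, b i ω * g i ω ∂P := by
      intro i
      have hUi : Integrable (fun ω => U ω * (b i ω * W ω i)) P :=
        int_mul_L2 hU2 (hbW2 i)
      have hGi : Integrable (fun ω => G ω * (b i ω * W ω i)) P :=
        int_mul_L2 hG2 (hbW2 i)
      have hsplit : ∫ ω, (U ω - G ω) * (b i ω * W ω i) ∂P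
          = (∫ ω, U ω * (b i ω * W ω i) ∂P) - ∫ ω, G ω * (b i ω * W ω i) ∂P := by
        rw [← integral_sub hUi hGi]
        exact integral_congr_ae (Eventually.of_forall fun ω => by ring)
      have hUW : Integrable (fun ω => U ω * W ω i) P := int_mul_L2 hU2 (hW2 i)
      have hterm1 : ∫ ω, U ω * (b i ω * W ω i) ∂P = h * ∫ ω, b i ω * g i ω ∂P := by
        have e1 : ∫ ω, U ω * (b i ω * W ω i) ∂P
            = ∫ ω, b i ω * (U ω * W ω i) ∂P :=
          integral_congr_ae (Eventually.of_forall fun ω => by ring)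
        have e2 := integral_mul_condexp P hm (hbmeas i)
          (Integrable.bdd_mul hUW (hbsm0 i) (ae_of_all _ (hbnorm i))) hUW
        have e3 : ∫ ω, b i ω * (P[fun ω => U ω * W ω i|m]) ω ∂P
            = ∫ ω, b i ω * (h * g i ω) ∂P := by
          refine integral_congr_ae ?_
          filter_upwards [hgce i] with ω hω
          rw [hω]
        rw [e1, e2, e3]
        rw [← integral_const_mul]
        exact integral_congr_ae (Eventually.of_forall fun ω => by ring)
      have hterm2 : ∫ ω, G ω * (b i ω * W ω i) ∂P = 0 := by
        have hGW : Integrable (fun ω => G ω * W ω i) P := int_mul_L2 hG2 (hW2 i)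
        have e1 : ∫ ω, G ω * (b i ω * W ω i) ∂P
            = ∫ ω, (G ω * b i ω) * W ω i ∂P :=
          integral_congr_ae (Eventually.of_forall fun ω => by ring)
        have hprod : Integrable (fun ω => (G ω * b i ω) * W ω i) P := by
          have : Integrable (fun ω => b i ω * (G ω * W ω i)) P :=
            Integrable.bdd_mul hGW (hbsm0 i) (ae_of_all _ (hbnorm i))
          exact this.congr (Eventually.of_forall fun ω => by ring)
        have e2 := integral_mul_condexp (b := fun ω => G ω * b i ω)
          (X := fun ω => W ω i) P hm (hGmeas.mul (hbmeas i)) hprod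
          ((hW2 i).integrable one_le_two)
        have e3 : ∫ ω, (G ω * b i ω) * (P[fun ω => W ω i|m]) ω ∂P = 0 := by
          have : ∫ ω, (G ω * b i ω) * (P[fun ω => W ω i|m]) ω ∂P
              = ∫ ω, (0:ℝ) ∂P := by
            refine integral_congr_ae ?_
            filter_upwards [hW0 i] with ω hω
            rw [hω]; simp
          rw [this, integral_zero]
        rw [e1, e2, e3]
      rw [hsplit, hterm1, hterm2, sub_zero]
    -- (I2) quadratic term
    have I2 : ∫ ω, (∑ i, b i ω * W ω i) ^ 2 ∂P = h * ∑ i, ∫ ω, (b i ω) ^ 2 ∂P := by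
      have hexp : ∀ ω, (∑ i, b i ω * W ω i) ^ 2
          = ∑ i, ∑ j, (b i ω * b j ω) * (W ω i * W ω j) := by
        intro ω
        rw [sq, Finset.sum_mul_sum]
        exact Finset.sum_congr rfl fun i _ => Finset.sum_congr rfl fun j _ => by ring
      have hint : ∀ i j : Fin d,
          Integrable (fun ω => (b i ω * b j ω) * (W ω i * W ω j)) P := by
        intro i j
        have := int_mul_L2 (hbW2 i) (hbW2 j)
        exact this.congr (Eventually.of_forall fun ω => by ring)
      have e1 : ∫ ω, (∑ i, b i ω * W ω i) ^ 2 ∂P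
          = ∑ i, ∑ j, ∫ ω, (b i ω * b j ω) * (W ω i * W ω j) ∂P := by
        rw [integral_congr_ae (Eventually.of_forall hexp),
          integral_finset_sum _ (fun i _ => integrable_finset_sum _ (fun j _ => hint i j))]
        exact Finset.sum_congr rfl fun i _ => integral_finset_sum _ (fun j _ => hint i j)
      have e2 : ∀ i j : Fin d, ∫ ω, (b i ω * b j ω) * (W ω i * W ω j) ∂P
          = if i = j then h * ∫ ω, (b i ω) ^ 2 ∂P else 0 := by
        intro i j
        have hWW : Integrable (fun ω => W ω i * W ω j) P := int_mul_L2 (hW2 i) (hW2 j)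
        have hprod : Integrable (fun ω => (b i ω * b j ω) * (W ω i * W ω j)) P := hint i j
        have e := integral_mul_condexp (b := fun ω => b i ω * b j ω)
          (X := fun ω => W ω i * W ω j) P hm ((hbmeas i).mul (hbmeas j)) hprod hWW
        rw [e]
        have e3 : ∫ ω, (b i ω * b j ω) * (P[fun ω => W ω i * W ω j|m]) ω ∂P
            = ∫ ω, (b i ω * b j ω) * (if i = j then h else 0) ∂P := by
          refine integral_congr_ae ?_
          filter_upwards [hWcov i j] with ω hω
          rw [hω]
        rw [e3]
        split_ifs with hij
        · subst hij
          rw [← integral_const_mul]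
          exact integral_congr_ae (Eventually.of_forall fun ω => by ring)
        · simp
      rw [e1]
      rw [Finset.mul_sum]
      refine Finset.sum_congr rfl fun i _ => ?_
      rw [Finset.sum_congr rfl fun j _ => e2 i j]
      simp
    -- (I4) ∫ (U-G)^2 = ∫U^2 - ∫G^2
    have I3 : ∫ ω, U ω * G ω ∂P = ∫ ω, (G ω) ^ 2 ∂P := by
      have e := integral_mul_condexp P hm hGmeas (int_mul_L2 hG2 hU2)
        (hU2.integrable one_le_two)
      have e0 : ∫ ω, U ω * G ω ∂P = ∫ ω, G ω * U ω ∂P :=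
        integral_congr_ae (Eventually.of_forall fun ω => by ring)
      rw [e0, e]
      refine integral_congr_ae ?_
      filter_upwards [hGce] with ω hω
      rw [hω]; ring
    have I4 : ∫ ω, (U ω - G ω) ^ 2 ∂P
        = (∫ ω, (U ω) ^ 2 ∂P) - ∫ ω, (G ω) ^ 2 ∂P := by
      have hUsq := hU2.integrable_sq
      have hGsq := hG2.integrable_sq
      have hUG := int_mul_L2 hU2 hG2
      have e1 : ∫ ω, (U ω - G ω) ^ 2 ∂P
          = (∫ ω, (U ω) ^ 2 ∂P) - 2 * (∫ ω, U ω * G ω ∂P) + ∫ ω, (G ω) ^ 2 ∂P := by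
        have : ∫ ω, (U ω - G ω) ^ 2 ∂P
            = ∫ ω, ((U ω) ^ 2 - 2 * (U ω * G ω) + (G ω) ^ 2) ∂P :=
          integral_congr_ae (Eventually.of_forall fun ω => by ring)
        have hA : Integrable (fun ω => (U ω) ^ 2 - 2 * (U ω * G ω)) P :=
          hUsq.sub (hUG.const_mul 2)
        rw [this, integral_add hA hGsq, integral_sub hUsq (hUG.const_mul 2),
          integral_const_mul]
      rw [e1, I3]; ring
    -- (I5) ∫ R*V
    have I5 : ∫ ω, (U ω - G ω) * (∑ i, b i ω * W ω i) ∂P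
        = ∑ i, h * ∫ ω, b i ω * g i ω ∂P := by
      have e1 : ∫ ω, (U ω - G ω) * (∑ i, b i ω * W ω i) ∂P
          = ∑ i, ∫ ω, (U ω - G ω) * (b i ω * W ω i) ∂P := by
        rw [← integral_finset_sum]
        · exact integral_congr_ae (Eventually.of_forall fun ω => by
            simp [Finset.mul_sum])
        · exact fun i _ => int_mul_L2 (hU2.sub hG2) (hbW2 i)
      rw [e1]
      exact Finset.sum_congr rfl fun i _ => I1 i
    -- (I6) nonnegativity of the square
    have hV2 : MemLp (fun ω => ∑ i, b i ω * W ω i) 2 P :=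
      memLp_finsetSum _ (fun i _ => hbW2 i)
    have hR2 : MemLp (fun ω => U ω - G ω) 2 P := hU2.sub hG2
    have I6 : 2 * (∫ ω, (U ω - G ω) * (∑ i, b i ω * W ω i) ∂P)
          - (∫ ω, (∑ i, b i ω * W ω i) ^ 2 ∂P)
        ≤ ∫ ω, (U ω - G ω) ^ 2 ∂P := by
      have hnn : 0 ≤ ∫ ω, ((U ω - G ω) - (∑ i, b i ω * W ω i)) ^ 2 ∂P :=
        integral_nonneg fun ω => sq_nonneg _
      have hRV := int_mul_L2 hR2 hV2
      have hRsq := hR2.integrable_sq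
      have hVsq := hV2.integrable_sq
      have e : ∫ ω, ((U ω - G ω) - (∑ i, b i ω * W ω i)) ^ 2 ∂P
          = (∫ ω, (U ω - G ω) ^ 2 ∂P)
            - 2 * (∫ ω, (U ω - G ω) * (∑ i, b i ω * W ω i) ∂P)
            + ∫ ω, (∑ i, b i ω * W ω i) ^ 2 ∂P := by
        have : ∫ ω, ((U ω - G ω) - (∑ i, b i ω * W ω i)) ^ 2 ∂P
            = ∫ ω, ((U ω - G ω) ^ 2
              - 2 * ((U ω - G ω) * (∑ i, b i ω * W ω i))
              + (∑ i, b i ω * W ω i) ^ 2) ∂P :=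
          integral_congr_ae (Eventually.of_forall fun ω => by ring)
        have hA : Integrable (fun ω => (U ω - G ω) ^ 2
            - 2 * ((U ω - G ω) * (∑ i, b i ω * W ω i))) P :=
          hRsq.sub (hRV.const_mul 2)
        rw [this, integral_add hA hVsq, integral_sub hRsq (hRV.const_mul 2),
          integral_const_mul]
      linarith [hnn, e.symm.le, e.le]
    -- combine: h * Σ ∫ b_i^2 ≤ ∫U² - ∫G²
    have hb2 : ∀ i, MemLp (b i) 2 P := fun i => (hbtop i).mono_exponent le_top
    have hbsq_int : ∀ i, Integrable (fun ω => (b i ω) ^ 2) P := fun i =>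
      (hb2 i).integrable_sq
    have hbg_int : ∀ i, Integrable (fun ω => b i ω * g i ω) P := fun i =>
      Integrable.bdd_mul (hgint i) (hbsm0 i) (ae_of_all _ (hbnorm i))
    have hbb : ∀ i, ∫ ω, (b i ω) ^ 2 ∂P ≤ ∫ ω, b i ω * g i ω ∂P := by
      intro i
      refine integral_mono (hbsq_int i) (hbg_int i) fun ω => ?_
      have := clamp_mul (g i ω) Mr hMr0
      calc (b i ω) ^ 2 ≤ g i ω * b i ω := this
        _ = b i ω * g i ω := by ring
    have key : h * ∑ i, ∫ ω, (b i ω) ^ 2 ∂P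
        ≤ (∫ ω, (U ω) ^ 2 ∂P) - ∫ ω, (G ω) ^ 2 ∂P := by
      have h6 := I6
      rw [I5, I2, I4] at h6
      have hsum : ∑ i, ∫ ω, (b i ω) ^ 2 ∂P ≤ ∑ i, ∫ ω, b i ω * g i ω ∂P :=
        Finset.sum_le_sum fun i _ => hbb i
      have hmul : h * (∑ i, ∫ ω, (b i ω) ^ 2 ∂P) ≤ h * ∑ i, ∫ ω, b i ω * g i ω ∂P :=
        mul_le_mul_of_nonneg_left hsum hh.le
      have hms : ∑ i, h * ∫ ω, b i ω * g i ω ∂P = h * ∑ i, ∫ ω, b i ω * g i ω ∂P :=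
        (Finset.mul_sum _ _ _).symm
      rw [hms] at h6
      linarith
    have efin : ∫ ω, (∑ i, min ((g i ω) ^ 2) (Mr ^ 2)) ∂P
        = ∑ i, ∫ ω, (b i ω) ^ 2 ∂P := by
      have hminint : ∀ i : Fin d, Integrable (fun ω => min ((g i ω) ^ 2) (Mr ^ 2)) P :=
        fun i => (hbsq_int i).congr
          (Eventually.of_forall fun ω => clamp_sq (g i ω) Mr hMr0)
      rw [integral_finset_sum _ (fun i _ => hminint i)]
      exact Finset.sum_congr rfl fun i _ => integral_congr_ae
        (Eventually.of_forall fun ω => (clamp_sq (g i ω) Mr hMr0).symm)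
    rw [efin]
    exact key
  -- Monotone convergence step
  set B : ℝ := (∫ ω, (U ω) ^ 2 ∂P) - ∫ ω, (G ω) ^ 2 ∂P with hB
  have hgm0 : ∀ i, Measurable[m0] (g i) := fun i => ((hgmeas i).mono hm).measurable
  have hGsum_meas : Measurable[m0] (fun ω => ∑ i, (g i ω) ^ 2) :=
    Finset.measurable_sum _ fun i _ => ((hgm0 i).pow_const 2)
  have hmin_int : ∀ (M : ℕ) (i : Fin d),
      Integrable (fun ω => min ((g i ω) ^ 2) ((M : ℝ) ^ 2)) P := by
    intro M i
    refine Integrable.mono' (integrable_const ((M : ℝ) ^ 2))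
      (((hgm0 i).pow_const 2).min measurable_const).aestronglyMeasurable
      (Eventually.of_forall fun ω => ?_)
    rw [Real.norm_of_nonneg (le_min (sq_nonneg _) (sq_nonneg _))]
    exact min_le_right _ _
  have hmct := integrable_and_le_of_monotone
    (F := fun M ω => ∑ i, min ((g i ω) ^ 2) ((M : ℝ) ^ 2))
    (G := fun ω => ∑ i, (g i ω) ^ 2) (B := B / h)
    (fun M => integrable_finset_sum _ fun i _ => hmin_int M i)
    (fun M ω => Finset.sum_nonneg fun i _ => le_min (sq_nonneg _) (sq_nonneg _))
    (fun ω a b hab => Finset.sum_le_sum fun i _ =>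
      min_le_min le_rfl (pow_le_pow_left₀ (Nat.cast_nonneg a) (Nat.cast_le.mpr hab) 2))
    (fun ω => ?_) hGsum_meas.aestronglyMeasurable
    (fun M => (le_div_iff₀ hh).mpr (by linarith [main M]))
  · refine ⟨hmct.1, ?_⟩
    have := (le_div_iff₀ hh).mp hmct.2
    linarith
  · -- pointwise convergence
    have hev : ∀ᶠ M : ℕ in atTop,
        (∑ i, min ((g i ω) ^ 2) ((M : ℝ) ^ 2)) = ∑ i, (g i ω) ^ 2 := by
      have h1 : ∀ i : Fin d, ∀ᶠ M : ℕ in atTop,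
          min ((g i ω) ^ 2) ((M : ℝ) ^ 2) = (g i ω) ^ 2 := by
        intro i
        have h2 : ∀ᶠ M : ℕ in atTop, |g i ω| ≤ (M : ℝ) :=
          (tendsto_natCast_atTop_atTop (R := ℝ)).eventually_ge_atTop (|g i ω|)
        filter_upwards [h2] with M hM
        refine min_eq_left ?_
        have := abs_nonneg (g i ω)
        nlinarith [sq_abs (g i ω)]
      filter_upwards [eventually_all.mpr h1] with M hM
      exact Finset.sum_congr rfl fun i _ => hM i
    exact tendsto_const_nhds.congr' (hev.mono fun M hM => hM.symm)


/-- One-step stability estimate for the generic discrete scheme. -/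
lemma one_step {Ω : Type} {m0 : MeasurableSpace Ω} (P : Measure Ω)
    [IsProbabilityMeasure P] {m : MeasurableSpace Ω} (hm : m ≤ m0)
    {h k_y L_f L_v εn : ℝ} (hh : 0 < h) (hLf : 0 < L_f)
    {d : ℕ} {W : Ω → Fin d → ℝ}
    (hW2 : ∀ i, MemLp (fun ω => W ω i) 2 P)
    (hW0 : ∀ i, P[(fun ω => W ω i)|m] =ᵐ[P] 0)
    (hWcov : ∀ i j, P[(fun ω => W ω i * W ω j)|m] =ᵐ[P] fun _ => if i = j then h else 0)
    {Ya Yb Ya' Yb' fa fb : Ω → ℝ} {Za Zb : Ω → Fin d → ℝ}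
    (hYa2 : MemLp Ya 2 P) (hYb2 : MemLp Yb 2 P)
    (hYa'2 : MemLp Ya' 2 P) (hYb'2 : MemLp Yb' 2 P)
    (hfa2 : MemLp fa 2 P) (hfb2 : MemLp fb 2 P)
    (hYam : StronglyMeasurable[m] Ya) (hYbm : StronglyMeasurable[m] Yb)
    (hfam : StronglyMeasurable[m] fa) (hfbm : StronglyMeasurable[m] fb)
    (haeq : Ya =ᵐ[P] fun ω => (P[Ya'|m]) ω + h * fa ω)
    (hbeq : Yb =ᵐ[P] fun ω => (P[Yb'|m]) ω + h * fb ω)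
    (hZa : ∀ i, (fun ω => Za ω i)
      =ᵐ[P] fun ω => h⁻¹ * (P[(fun ω' => Ya' ω' * W ω' i)|m]) ω)
    (hZb : ∀ i, (fun ω => Zb ω i)
      =ᵐ[P] fun ω => h⁻¹ * (P[(fun ω' => Yb' ω' * W ω' i)|m]) ω)
    {φ ψ : Ω → ℝ} (hφ2 : MemLp φ 2 P) (hψ2 : MemLp ψ 2 P)
    (hsplit : (fun ω => fa ω - fb ω) =ᵐ[P] fun ω => φ ω + ψ ω)
    (hφbd : ∫ ω, φ ω * (Ya ω - Yb ω) ∂P ≤ k_y * ∫ ω, (Ya ω - Yb ω) ^ 2 ∂P)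
    (hψbd : ∫ ω, (ψ ω) ^ 2 ∂P
      ≤ L_v * εn + L_f * ∫ ω, (∑ i, (Za ω i - Zb ω i) ^ 2) ∂P) :
    (∫ ω, (Ya ω - Yb ω) ^ 2 ∂P)
        + (h/2) * ∫ ω, (∑ i, (Za ω i - Zb ω i) ^ 2) ∂P
      ≤ (∫ ω, (Ya' ω - Yb' ω) ^ 2 ∂P)
        + h * (2*k_y + 2*L_f) * (∫ ω, (Ya ω - Yb ω) ^ 2 ∂P)
        + (L_v/(2*L_f)) * h * εn := by
  have hLf' : L_f ≠ 0 := ne_of_gt hLf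
  set AA : ℝ := ∫ ω, (Ya ω - Yb ω) ^ 2 ∂P with hAA
  set zz : ℝ := ∫ ω, (∑ i, (Za ω i - Zb ω i) ^ 2) ∂P with hzz
  set AA' : ℝ := ∫ ω, (Ya' ω - Yb' ω) ^ 2 ∂P with hAA'
  have hU2 : MemLp (fun ω => Ya' ω - Yb' ω) 2 P := hYa'2.sub hYb'2
  have hdYn : MemLp (fun ω => Ya ω - Yb ω) 2 P := hYa2.sub hYb2
  have hdFn : MemLp (fun ω => fa ω - fb ω) 2 P := hfa2.sub hfb2
  have hG2 : MemLp (fun ω => (Ya ω - Yb ω) - h * (fa ω - fb ω)) 2 P :=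
    hdYn.sub (hdFn.const_mul h)
  have hGmeas : StronglyMeasurable[m]
      (fun ω => (Ya ω - Yb ω) - h * (fa ω - fb ω)) :=
    (hYam.sub hYbm).sub ((hfam.sub hfbm).const_mul h)
  have hYa'i : Integrable Ya' P := hYa'2.integrable one_le_two
  have hYb'i : Integrable Yb' P := hYb'2.integrable one_le_two
  have hGce : P[(fun ω => Ya' ω - Yb' ω)|m]
      =ᵐ[P] (fun ω => (Ya ω - Yb ω) - h * (fa ω - fb ω)) := by
    have h1 : P[(fun ω => Ya' ω - Yb' ω)|m] =ᵐ[P] P[Ya'|m] - P[Yb'|m] :=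
      condExp_sub hYa'i hYb'i m
    filter_upwards [h1, haeq, hbeq] with ω e1 e2 e3
    rw [e1]
    simp only [Pi.sub_apply]
    rw [e2, e3]
    ring
  set g : Fin d → Ω → ℝ := fun i ω => h⁻¹ *
      ((P[(fun ω' => Ya' ω' * W ω' i)|m]) ω - (P[(fun ω' => Yb' ω' * W ω' i)|m]) ω)
    with hgdef
  have hgmeas : ∀ i, StronglyMeasurable[m] (g i) := fun i =>
    (stronglyMeasurable_condExp.sub stronglyMeasurable_condExp).const_mul _
  have hgint : ∀ i, Integrable (g i) P := fun i =>
    (integrable_condExp.sub integrable_condExp).const_mul _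
  have hYaW : ∀ i, Integrable (fun ω => Ya' ω * W ω i) P := fun i =>
    int_mul_L2 hYa'2 (hW2 i)
  have hYbW : ∀ i, Integrable (fun ω => Yb' ω * W ω i) P := fun i =>
    int_mul_L2 hYb'2 (hW2 i)
  have hgce : ∀ i, P[(fun ω => (Ya' ω - Yb' ω) * W ω i)|m]
      =ᵐ[P] fun ω => h * g i ω := by
    intro i
    have heq : (fun ω => (Ya' ω - Yb' ω) * W ω i)
        = (fun ω => Ya' ω * W ω i) - (fun ω => Yb' ω * W ω i) := by
      funext ω; simp only [Pi.sub_apply]; ring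
    rw [heq]
    have h1 := condExp_sub (μ := P) (m := m) (hYaW i) (hYbW i)
    filter_upwards [h1] with ω e1
    rw [e1]
    simp only [Pi.sub_apply, hgdef]
    field_simp
  obtain ⟨hgsq_int, hkey⟩ := step_estimate P hm hh hW2 hW0 hWcov
    hU2 hG2 hGmeas hGce hgmeas hgint hgce
  have hzg : zz = ∫ ω, (∑ i, (g i ω) ^ 2) ∂P := by
    rw [hzz]
    refine integral_congr_ae ?_
    have hae : ∀ᵐ ω ∂P, ∀ i : Fin d, Za ω i - Zb ω i = g i ω := by
      rw [ae_all_iff]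
      intro i
      filter_upwards [hZa i, hZb i] with ω e1 e2
      rw [e1, e2]
      simp only [hgdef]
      ring
    filter_upwards [hae] with ω hω
    exact Finset.sum_congr rfl fun i _ => by rw [hω i]
  rw [← hzg] at hkey
  have hdYsq := hdYn.integrable_sq
  have hdFsq := hdFn.integrable_sq
  have hdYdF := int_mul_L2 hdYn hdFn
  have hGexp : ∫ ω, ((Ya ω - Yb ω) - h * (fa ω - fb ω)) ^ 2 ∂P
      = AA - 2*h*(∫ ω, (Ya ω - Yb ω) * (fa ω - fb ω) ∂P)
        + h^2 * ∫ ω, (fa ω - fb ω) ^ 2 ∂P := by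
    have e0 : ∫ ω, ((Ya ω - Yb ω) - h * (fa ω - fb ω)) ^ 2 ∂P
        = ∫ ω, ((Ya ω - Yb ω) ^ 2
            - (2*h) * ((Ya ω - Yb ω) * (fa ω - fb ω))
            + h^2 * (fa ω - fb ω) ^ 2) ∂P :=
      integral_congr_ae (Eventually.of_forall fun ω => by ring)
    have hA' : Integrable (fun ω => (Ya ω - Yb ω) ^ 2
        - (2*h) * ((Ya ω - Yb ω) * (fa ω - fb ω))) P :=
      hdYsq.sub (hdYdF.const_mul (2*h))
    rw [e0, integral_add hA' (hdFsq.const_mul (h^2)),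
      integral_sub hdYsq (hdYdF.const_mul (2*h)), integral_const_mul,
      integral_const_mul]
  rw [hGexp] at hkey
  have hdFsq0 : 0 ≤ ∫ ω, (fa ω - fb ω) ^ 2 ∂P :=
    integral_nonneg fun ω => sq_nonneg _
  have hIdF : ∫ ω, (Ya ω - Yb ω) * (fa ω - fb ω) ∂P
      = (∫ ω, (Ya ω - Yb ω) * φ ω ∂P) + ∫ ω, (Ya ω - Yb ω) * ψ ω ∂P := by
    have e1 : ∫ ω, (Ya ω - Yb ω) * (fa ω - fb ω) ∂P
        = ∫ ω, ((Ya ω - Yb ω) * φ ω + (Ya ω - Yb ω) * ψ ω) ∂P := by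
      refine integral_congr_ae ?_
      filter_upwards [hsplit] with ω e
      rw [show fa ω - fb ω = φ ω + ψ ω from e]
      ring
    rw [e1, integral_add (int_mul_L2 hdYn hφ2) (int_mul_L2 hdYn hψ2)]
  have hφest : ∫ ω, (Ya ω - Yb ω) * φ ω ∂P ≤ k_y * AA := by
    have e : ∫ ω, (Ya ω - Yb ω) * φ ω ∂P = ∫ ω, φ ω * (Ya ω - Yb ω) ∂P :=
      integral_congr_ae (Eventually.of_forall fun ω => by ring)
    rw [e]
    exact hφbd
  have hψest : ∫ ω, (Ya ω - Yb ω) * ψ ω ∂P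
      ≤ L_f * AA + (1/(4*L_f)) * ∫ ω, (ψ ω) ^ 2 ∂P := by
    have hrhs : Integrable (fun ω => L_f * (Ya ω - Yb ω) ^ 2
        + (1/(4*L_f)) * (ψ ω) ^ 2) P :=
      (hdYsq.const_mul L_f).add (hψ2.integrable_sq.const_mul _)
    have hmono := integral_mono (int_mul_L2 hdYn hψ2) hrhs (fun ω => by
      have h4 : (0:ℝ) < 4*L_f := by linarith
      have key : (Ya ω - Yb ω) * ψ ω - L_f*(Ya ω - Yb ω)^2 ≤ (ψ ω)^2/(4*L_f) := by
        rw [le_div_iff₀ h4]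
        nlinarith [sq_nonneg (2*L_f*(Ya ω - Yb ω) - ψ ω)]
      have e : (1/(4*L_f)) * (ψ ω)^2 = (ψ ω)^2/(4*L_f) := by ring
      linarith [key, e.le, e.ge])
    rw [integral_add (hdYsq.const_mul L_f) (hψ2.integrable_sq.const_mul _),
      integral_const_mul, integral_const_mul] at hmono
    exact hmono
  have hψsq : ∫ ω, (ψ ω) ^ 2 ∂P ≤ L_v * εn + L_f * zz := hψbd
  have hq : ∫ ω, (Ya ω - Yb ω) * (fa ω - fb ω) ∂P
      ≤ (k_y + L_f) * AA + (1/(4*L_f)) * (L_v * εn + L_f * zz) := by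
    rw [hIdF]
    have h4 : (1/(4*L_f)) * (∫ ω, (ψ ω) ^ 2 ∂P)
        ≤ (1/(4*L_f)) * (L_v * εn + L_f * zz) :=
      mul_le_mul_of_nonneg_left hψsq (by positivity)
    linarith
  have h2h : 2*h*(∫ ω, (Ya ω - Yb ω) * (fa ω - fb ω) ∂P)
      ≤ 2*h*((k_y + L_f) * AA + (1/(4*L_f)) * (L_v * εn + L_f * zz)) :=
    mul_le_mul_of_nonneg_left hq (by positivity)
  have hexp : 2*h*((k_y + L_f) * AA + (1/(4*L_f)) * (L_v * εn + L_f * zz))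
      = h*(2*k_y+2*L_f)*AA + (L_v/(2*L_f))*h*εn + (h/2)*zz := by
    field_simp
    ring
  have hhdf : 0 ≤ h^2 * ∫ ω, (fa ω - fb ω) ^ 2 ∂P := by positivity
  linarith [hkey, h2h, hexp, hhdf]

/-- Discrete Gronwall-type estimate, purely arithmetic. -/
lemma gronwall_aux {N : ℕ} {A z ε' : ℕ → ℝ} {h β c EE T D : ℝ}
    (hh : 0 < h) (hβ0 : 0 ≤ β) (hc0 : 0 ≤ c) (hhβ : h*β ≤ 1/2)
    (hNh : (N:ℝ)*h = T)
    (hDdef : D = Real.exp (2*β*T))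
    (hA0 : ∀ n, 0 ≤ A n) (hz0 : ∀ n, 0 ≤ z n)
    (hEE0 : 0 ≤ EE) (hEEle : ∀ n, n < N → ε' n ≤ EE)
    (step : ∀ n, n < N → A n + (h/2)*z n ≤ A (n+1) + h*β*A n + c*h*ε' n) :
    (∀ n, n ≤ N → A n ≤ D*(A N + c*T*EE)) ∧
      ∑ n ∈ Finset.range N, h * z n
        ≤ 2*(A N) + 2*(β*T)*(D*(A N + c*T*EE)) + 2*(c*T)*EE := by
  have hβh0 : 0 ≤ h * β := mul_nonneg hh.le hβ0
  obtain ⟨K, hKdef⟩ : ∃ x : ℝ, x = 1 + 2*(h*β) := ⟨_, rfl⟩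
  have hK1 : 1 ≤ K := by rw [hKdef]; linarith
  have hK0 : (0:ℝ) ≤ K := by linarith
  have hD0 : 0 < D := by rw [hDdef]; exact Real.exp_pos _
  have hrec : ∀ n, n < N → A n ≤ K * (A (n+1) + c*h*ε' n) := by
    intro n hn
    have hs := step n hn
    have hz' : 0 ≤ (h/2) * z n := mul_nonneg (by linarith) (hz0 n)
    have h1 : (1 - h*β) * A n ≤ A (n+1) + c*h*ε' n := by nlinarith [hs, hz']
    have h2 : A n ≤ K * ((1 - h*β) * A n) := by
      rw [hKdef]
      nlinarith [hA0 n, hhβ, hβh0,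
        mul_nonneg (mul_nonneg hβh0 (by linarith : (0:ℝ) ≤ 1 - 2*(h*β))) (hA0 n)]
    have h3 : K * ((1 - h*β) * A n) ≤ K * (A (n+1) + c*h*ε' n) :=
      mul_le_mul_of_nonneg_left h1 hK0
    linarith
  have hKN : K^N ≤ D := by
    rw [hDdef]
    calc K^N ≤ (Real.exp (2*(h*β)))^N := by
          refine pow_le_pow_left₀ hK0 ?_ N
          rw [hKdef]
          linarith [Real.add_one_le_exp (2*(h*β))]
      _ = Real.exp ((N:ℝ) * (2*(h*β))) := (Real.exp_nat_mul _ _).symm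
      _ = Real.exp (2*β*T) := by
          rw [show (N:ℝ) * (2*(h*β)) = 2*β*((N:ℝ)*h) by ring, hNh]
  have hKmono : ∀ k, k ≤ N → K^k ≤ D := fun k hk =>
    le_trans (pow_le_pow_right₀ hK1 hk) hKN
  have hche : 0 ≤ c*h*EE := mul_nonneg (mul_nonneg hc0 hh.le) hEE0
  have ind : ∀ k n, n + k = N → A n ≤ K^k * (A N + (k:ℝ)*(c*h*EE)) := by
    intro k
    induction k with
    | zero =>
      intro n hn
      have hnN : n = N := by omega
      subst hnN
      simp
    | succ k ih =>
      intro n hn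
      have hnN : n < N := by omega
      have h1 := hrec n hnN
      have h2 := ih (n+1) (by omega)
      have h3 : c*h*ε' n ≤ c*h*EE :=
        mul_le_mul_of_nonneg_left (hEEle n hnN) (mul_nonneg hc0 hh.le)
      have hKk : (0:ℝ) ≤ K^k := pow_nonneg hK0 k
      have h4 : A (n+1) + c*h*ε' n ≤ K^k*(A N + (k:ℝ)*(c*h*EE)) + c*h*EE := by linarith
      have h5 : A n ≤ K*(K^k*(A N + (k:ℝ)*(c*h*EE)) + c*h*EE) :=
        le_trans h1 (mul_le_mul_of_nonneg_left h4 hK0)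
      have h6 : K*(K^k*(A N + (k:ℝ)*(c*h*EE)) + c*h*EE)
          = K^(k+1)*(A N + (k:ℝ)*(c*h*EE)) + K*(c*h*EE) := by ring
      have h7 : K*(c*h*EE) ≤ K^(k+1)*(c*h*EE) :=
        mul_le_mul_of_nonneg_right (le_self_pow₀ hK1 (Nat.succ_ne_zero k)) hche
      have h8 : K^(k+1)*(A N + (k:ℝ)*(c*h*EE)) + K^(k+1)*(c*h*EE)
          = K^(k+1)*(A N + ((k:ℝ)+1)*(c*h*EE)) := by ring
      have h9 : A n ≤ K^(k+1)*(A N + ((k:ℝ)+1)*(c*h*EE)) := by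
        rw [← h8]
        rw [h6] at h5
        linarith
      push_cast
      exact h9
  have hAb : ∀ n, n ≤ N → A n ≤ D*(A N + c*T*EE) := by
    intro n hn
    have h1 := ind (N - n) n (by omega)
    have h2 : ((N - n : ℕ):ℝ)*(c*h*EE) ≤ c*T*EE := by
      calc ((N - n : ℕ):ℝ)*(c*h*EE) ≤ (N:ℝ)*(c*h*EE) := by
            refine mul_le_mul_of_nonneg_right ?_ hche
            exact_mod_cast Nat.sub_le N n
        _ = c*T*EE := by rw [show (N:ℝ)*(c*h*EE) = c*((N:ℝ)*h)*EE by ring, hNh]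
    have h3 : A N + ((N - n : ℕ):ℝ)*(c*h*EE) ≤ A N + c*T*EE := by linarith
    have h4 : 0 ≤ A N + ((N - n : ℕ):ℝ)*(c*h*EE) :=
      add_nonneg (hA0 N) (mul_nonneg (Nat.cast_nonneg _) hche)
    calc A n ≤ K^(N-n) * (A N + ((N - n : ℕ):ℝ)*(c*h*EE)) := h1
      _ ≤ D * (A N + c*T*EE) :=
        mul_le_mul (hKmono _ (Nat.sub_le N n)) h3 h4 hD0.le
  refine ⟨hAb, ?_⟩
  have hper : ∀ n ∈ Finset.range N, (h/2) * z n
      ≤ (A (n+1) - A n) + (h*β*(D*(A N + c*T*EE)) + c*h*EE) := by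
    intro n hn'
    have hn := Finset.mem_range.mp hn'
    have h1 := step n hn
    have h2 : h*β*A n ≤ h*β*(D*(A N + c*T*EE)) :=
      mul_le_mul_of_nonneg_left (hAb n hn.le) hβh0
    have h3 : c*h*ε' n ≤ c*h*EE :=
      mul_le_mul_of_nonneg_left (hEEle n hn) (mul_nonneg hc0 hh.le)
    linarith
  have hsum1 : ∑ n ∈ Finset.range N, (h/2)*z n
      ≤ (A N - A 0) + (N:ℝ)*(h*β*(D*(A N + c*T*EE)) + c*h*EE) := by
    calc ∑ n ∈ Finset.range N, (h/2)*z n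
        ≤ ∑ n ∈ Finset.range N,
            ((A (n+1) - A n) + (h*β*(D*(A N + c*T*EE)) + c*h*EE)) :=
          Finset.sum_le_sum hper
      _ = (A N - A 0) + (N:ℝ)*(h*β*(D*(A N + c*T*EE)) + c*h*EE) := by
          rw [Finset.sum_add_distrib, Finset.sum_range_sub (f := A),
            Finset.sum_const, Finset.card_range, nsmul_eq_mul]
  have hNmul : (N:ℝ)*(h*β*(D*(A N + c*T*EE)) + c*h*EE)
      = β*T*(D*(A N + c*T*EE)) + c*T*EE := by
    rw [show (N:ℝ)*(h*β*(D*(A N + c*T*EE)) + c*h*EE)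
      = β*((N:ℝ)*h)*(D*(A N + c*T*EE)) + c*((N:ℝ)*h)*EE by ring, hNh]
  have hsum2 : ∑ n ∈ Finset.range N, h * z n
      = 2 * ∑ n ∈ Finset.range N, (h/2)*z n := by
    rw [Finset.mul_sum]
    exact Finset.sum_congr rfl fun n _ => by ring
  rw [hsum2]
  rw [hNmul] at hsum1
  linarith [hA0 0, hsum1]
/-- A posteriori stability estimate for the generic discrete BSDE scheme:
there is a constant `C > 0` depending only on `k_y, L_f, L_v, T` such that, for every
`N ≥ 1` with `h = T/N` and `h·(2k_y + 2L_f) ≤ 1/2`, for any two solutions of the scheme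
satisfying the driver-difference assumption,
`max_n E[(δY_n)²] + Σ_n h·E[|δZ_n|²] ≤ C·(E[(δY_N)²] + max_n ε_n)`. -/
theorem stability_estimate_discrete_scheme
    (T k_y L_f L_v : ℝ) (hT : 0 < T) (hLf : 0 < L_f) (hLv : 0 ≤ L_v)
    (hkyLf : 0 ≤ k_y + L_f) :
    ∃ C : ℝ, 0 < C ∧
      ∀ (N : ℕ) (hN : 1 ≤ N),
        (T / N) * (2 * k_y + 2 * L_f) ≤ 1 / 2 →
        ∀ (Ω : Type) [MeasurableSpace Ω] (P : Measure Ω) [IsProbabilityMeasure P]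
          (d : ℕ), 1 ≤ d →
        ∀ (𝒢 : Filtration ℕ (inferInstance : MeasurableSpace Ω))
          (ΔW : ℕ → Ω → Fin d → ℝ)
          (Y1 Y2 : ℕ → Ω → ℝ) (Z1 Z2 : ℕ → Ω → Fin d → ℝ)
          (f1 f2 : ℕ → Ω → ℝ) (ε : ℕ → ℝ),
          IncrementsOK P N d (T / N) 𝒢 ΔW →
          SolvesScheme P N d (T / N) 𝒢 ΔW Y1 Z1 f1 →
          SolvesScheme P N d (T / N) 𝒢 ΔW Y2 Z2 f2 →
          (∀ n < N, 0 ≤ ε n) →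
          DriverDiff P N d 𝒢 k_y L_f L_v ε Y1 Y2 Z1 Z2 f1 f2 →
          (Finset.range (N + 1)).sup' (nonempty_range_iff.mpr (Nat.succ_ne_zero N))
              (fun n => ∫ ω, (Y1 n ω - Y2 n ω) ^ 2 ∂P)
            + ∑ n ∈ Finset.range N,
                (T / N) * ∫ ω, (∑ i, (Z1 n ω i - Z2 n ω i) ^ 2) ∂P
          ≤ C * ((∫ ω, (Y1 N ω - Y2 N ω) ^ 2 ∂P)
              + (Finset.range N).sup'
                  (nonempty_range_iff.mpr (Nat.one_le_iff_ne_zero.mp hN)) ε) := by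

  classical
  obtain ⟨β, hβdef⟩ : ∃ x : ℝ, x = 2 * k_y + 2 * L_f := ⟨_, rfl⟩
  obtain ⟨c, hcdef⟩ : ∃ x : ℝ, x = L_v / (2 * L_f) := ⟨_, rfl⟩
  obtain ⟨D, hDdef⟩ : ∃ x : ℝ, x = Real.exp (2 * β * T) := ⟨_, rfl⟩
  have hβ0 : (0:ℝ) ≤ β := by rw [hβdef]; linarith
  have hc0 : (0:ℝ) ≤ c := by rw [hcdef]; exact div_nonneg hLv (by linarith)
  have hD0 : 0 < D := by rw [hDdef]; exact Real.exp_pos _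
  have hβT0 : 0 ≤ β * T := mul_nonneg hβ0 hT.le
  have hcT0 : 0 ≤ c * T := mul_nonneg hc0 hT.le
  refine ⟨(1 + 2 * β * T) * D * (1 + c * T) + 2 + 2 * c * T, ?_, ?_⟩
  · have h1 : (0:ℝ) < 1 + 2 * β * T := by linarith
    have h2 : (0:ℝ) < 1 + c * T := by linarith
    nlinarith [mul_pos (mul_pos h1 hD0) h2]
  intro N hN hsmall Ω mΩ P hP d hd 𝒢 ΔW Y1 Y2 Z1 Z2 f1 f2 ε hinc hs1 hs2 hε0 hdd
  have hNR : (0:ℝ) < (N:ℝ) := by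
    have : 0 < N := hN
    exact_mod_cast this
  obtain ⟨h, hhdef⟩ : ∃ x : ℝ, x = T / (N:ℝ) := ⟨_, rfl⟩
  rw [← hhdef] at hsmall hinc hs1 hs2 ⊢
  have hh : 0 < h := by rw [hhdef]; exact div_pos hT hNR
  have hhβ : h * β ≤ 1/2 := by rw [hβdef]; exact hsmall
  have hNh : (N:ℝ) * h = T := by rw [hhdef]; field_simp
  obtain ⟨hY1mem, hY1meas, hf1mem, hf1meas, hY1eq, hZ1eq⟩ := hs1
  obtain ⟨hY2mem, hY2meas, hf2mem, hf2meas, hY2eq, hZ2eq⟩ := hs2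
  obtain ⟨A, hAfun⟩ : ∃ f : ℕ → ℝ,
      f = fun n => ∫ ω, (Y1 n ω - Y2 n ω) ^ 2 ∂P := ⟨_, rfl⟩
  obtain ⟨z, hzfun⟩ : ∃ f : ℕ → ℝ,
      f = fun n => ∫ ω, (∑ i, (Z1 n ω i - Z2 n ω i) ^ 2) ∂P := ⟨_, rfl⟩
  obtain ⟨EE, hEdef⟩ : ∃ x : ℝ, x = (Finset.range N).sup'
      (nonempty_range_iff.mpr (Nat.one_le_iff_ne_zero.mp hN)) ε := ⟨_, rfl⟩
  rw [← hAfun, ← hEdef]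
  have hA : ∀ n, A n = ∫ ω, (Y1 n ω - Y2 n ω) ^ 2 ∂P := fun n => by rw [hAfun]
  have hz : ∀ n, z n = ∫ ω, (∑ i, (Z1 n ω i - Z2 n ω i) ^ 2) ∂P := fun n => by
    rw [hzfun]
  have hA0 : ∀ n, 0 ≤ A n := fun n => by
    rw [hA n]; exact integral_nonneg fun ω => sq_nonneg _
  have hz0 : ∀ n, 0 ≤ z n := fun n => by
    rw [hz n]; exact integral_nonneg fun ω => Finset.sum_nonneg fun i _ => sq_nonneg _
  have hEEle : ∀ n, n < N → ε n ≤ EE := fun n hn => by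
    rw [hEdef]; exact Finset.le_sup' ε (Finset.mem_range.mpr hn)
  have hEE0 : 0 ≤ EE := le_trans (hε0 0 hN) (hEEle 0 hN)
  have step : ∀ n, n < N → A n + (h/2) * z n
      ≤ A (n+1) + h * β * A n + c * h * ε n := by
    intro n hn
    obtain ⟨hWmeas, hW2, hW0, hWcov⟩ := hinc n hn
    obtain ⟨φ, ψ, hφm, hψm, hφ2, hψ2, hsplit, hφbd, hψbd⟩ := hdd n hn
    have hone := one_step P (𝒢.le n) hh hLf hW2 hW0 hWcov
      (hY1mem n hn.le) (hY2mem n hn.le) (hY1mem (n+1) hn) (hY2mem (n+1) hn)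
      (hf1mem n hn) (hf2mem n hn)
      (hY1meas n hn.le) (hY2meas n hn.le) (hf1meas n hn) (hf2meas n hn)
      (hY1eq n hn) (hY2eq n hn) (hZ1eq n hn) (hZ2eq n hn)
      hφ2 hψ2 hsplit hφbd hψbd
    rw [← hA n, ← hA (n+1), ← hz n, ← hβdef, ← hcdef] at hone
    linarith [hone]
  obtain ⟨hAb, hsumz⟩ := gronwall_aux hh hβ0 hc0 hhβ hNh hDdef hA0 hz0 hEE0 hEEle step
  have hsup : (Finset.range (N+1)).sup' (nonempty_range_iff.mpr (Nat.succ_ne_zero N)) A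
      ≤ D*(A N + c*T*EE) := by
    refine Finset.sup'_le _ _ fun n hn => ?_
    exact hAb n (Nat.lt_succ_iff.mp (Finset.mem_range.mp hn))
  have hzsum_eq : ∑ n ∈ Finset.range N, h * (∫ ω, (∑ i, (Z1 n ω i - Z2 n ω i) ^ 2) ∂P)
      = ∑ n ∈ Finset.range N, h * z n :=
    Finset.sum_congr rfl fun n _ => by rw [hz n]
  have hAN : ∫ ω, (Y1 N ω - Y2 N ω) ^ 2 ∂P = A N := (hA N).symm
  rw [hAN, hzsum_eq]
  have t1 : A N + c*T*EE ≤ (1+c*T)*(A N + EE) := by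
    nlinarith [mul_nonneg hcT0 (hA0 N), hEE0]
  have t2 : D*(A N + c*T*EE) ≤ D*((1+c*T)*(A N + EE)) :=
    mul_le_mul_of_nonneg_left t1 hD0.le
  have t3 : (0:ℝ) ≤ 1+2*β*T := by linarith
  have t4 : (1+2*β*T)*(D*(A N + c*T*EE)) ≤ (1+2*β*T)*(D*((1+c*T)*(A N + EE))) :=
    mul_le_mul_of_nonneg_left t2 t3
  have t5 : 2*(A N) + 2*(c*T)*EE ≤ (2+2*c*T)*(A N + EE) := by
    nlinarith [mul_nonneg hcT0 (hA0 N), hEE0]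
  have t6 : ((1+2*β*T)*D*(1+c*T) + 2 + 2*c*T)*(A N + EE)
      = (1+2*β*T)*(D*((1+c*T)*(A N + EE))) + (2+2*c*T)*(A N + EE) := by ring
  linarith [hsup, hsumz, t4, t5]

end
end

section
/- Let (Y¹, Z¹) with drivers (f¹_n) and (Y², Z²) with drivers (f²_n) be two solutions of the generic discrete scheme whose driver differences satisfy the driver-difference assumption with parameters k_y ∈ ℝ, L_f ≥ 0, L_v ≥ 0 and nonnegative reals (ε_n)_{0≤n<N}. Let λ > 0 satisfy λ ≥ L_f, 2k_y + λ ≥ 0 and h·(2k_y + λ) < 1, and set A := (1 − h·(2k_y + λ))⁻¹. Then for every 0 ≤ n ≤ N, E[(δY_n)²] ≤ A^N·E[(δY_N)²] + N·h·L_v·λ⁻¹·A^N·max_{0≤k<N} ε_k. -/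
open MeasureTheory Finset

noncomputable section

set_option linter.unusedSectionVars false
set_option maxHeartbeats 1000000

namespace DYAux
variable {Ω : Type} {m0 : MeasurableSpace Ω} {P : Measure Ω} [IsProbabilityMeasure P]

lemma intL2 {f g : Ω → ℝ} (hf : MemLp f 2 P) (hg : MemLp g 2 P) :
    Integrable (fun ω => f ω * g ω) P := by
  have h := hg.smul (φ := f) hf (r := 1)
  rw [memLp_one_iff_integrable] at h
  exact h

lemma sqInt {f : Ω → ℝ} (hf : MemLp f 2 P) : Integrable (fun ω => f ω ^ 2) P := by
  simpa [pow_two] using intL2 hf hf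

lemma integral_mul_condExp {m : MeasurableSpace Ω} (hm : m ≤ m0)
    {f g : Ω → ℝ} (hf : StronglyMeasurable[m] f)
    (hfg : Integrable (fun ω => f ω * g ω) P) (hg : Integrable g P) :
    ∫ ω, f ω * g ω ∂P = ∫ ω, f ω * (P[g|m]) ω ∂P := by
  have h1 : ∫ ω, (P[(fun ω => f ω * g ω)|m]) ω ∂P = ∫ ω, f ω * g ω ∂P :=
    integral_condExp hm
  rw [← h1]
  refine integral_congr_ae ?_
  have h2 := condExp_mul_of_stronglyMeasurable_left (μ := P) hf hfg hg
  filter_upwards [h2] with ω hω using hω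

lemma trunc_sq_le (s K : ℝ) (hK : 0 ≤ K) :
    (max (min s K) (-K)) ^ 2 ≤ (max (min s K) (-K)) * s := by
  rcases le_total 0 s with hs | hs
  · have h1 : max (min s K) (-K) ≤ s := max_le (min_le_left _ _) (by linarith)
    have h2 : 0 ≤ max (min s K) (-K) := le_max_of_le_left (le_min hs hK)
    nlinarith
  · have hmin : min s K = s := min_eq_left (by linarith)
    have h1 : s ≤ max (min s K) (-K) := by rw [hmin]; exact le_max_left _ _
    have h2 : max (min s K) (-K) ≤ 0 := max_le (le_trans (min_le_left _ _) hs) (by linarith)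
    nlinarith

lemma trunc_sq_eq (s K : ℝ) (hK : 0 ≤ K) :
    (max (min s K) (-K)) ^ 2 = min (s ^ 2) (K ^ 2) := by
  rcases le_total 0 s with hs | hs
  · have : max (min s K) (-K) = min s K := max_eq_left (le_trans (by linarith) (le_min hs hK))
    rw [this]
    rcases le_total s K with h | h
    · rw [min_eq_left h, min_eq_left (by nlinarith)]
    · rw [min_eq_right h, min_eq_right (by nlinarith)]
  · have hmin : min s K = s := min_eq_left (by linarith)
    rw [hmin]
    rcases le_total (-K) s with h | h
    · rw [max_eq_left h, min_eq_left (by nlinarith)]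
    · rw [max_eq_right h, neg_sq, min_eq_right (by nlinarith)]

lemma trunc_abs_le (s K : ℝ) (hK : 0 ≤ K) : |max (min s K) (-K)| ≤ K := by
  rw [abs_le]
  exact ⟨le_max_right _ _, max_le (le_trans (min_le_right _ _) le_rfl) (by linarith)⟩

lemma zbound_trunc {m : MeasurableSpace Ω} (hm : m ≤ m0) (h : ℝ) (hh : 0 < h) (d : ℕ)
    (W : Ω → Fin d → ℝ) (hWL2 : ∀ i, MemLp (fun ω => W ω i) 2 P)
    (hWcov : ∀ i j, P[(fun ω => W ω i * W ω j)|m] =ᵐ[P] fun _ => if i = j then h else 0)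
    (M : Ω → ℝ) (hML2 : MemLp M 2 P)
    (ζ : Fin d → Ω → ℝ) (hζm : ∀ i, StronglyMeasurable[m] (ζ i))
    (hζint : ∀ i, Integrable (ζ i) P)
    (hMW : ∀ i, P[(fun ω => M ω * W ω i)|m] =ᵐ[P] fun ω => h * ζ i ω)
    (T : Fin d → Ω → ℝ) (K : ℝ) (hK : 0 ≤ K)
    (hTm : ∀ i, StronglyMeasurable[m] (T i))
    (hTabs : ∀ i ω, ‖T i ω‖ ≤ K)
    (hTζ : ∀ i ω, T i ω ^ 2 ≤ T i ω * ζ i ω) :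
    h * ∫ ω, ∑ i, T i ω ^ 2 ∂P ≤ ∫ ω, M ω ^ 2 ∂P := by
  haveI : SigmaFinite (P.trim hm) := inferInstance
  have hTtop : ∀ i, MemLp (T i) ⊤ P := fun i =>
    memLp_top_of_bound ((hTm i).mono hm).aestronglyMeasurable _
      (Filter.Eventually.of_forall (hTabs i))
  have hTL2 : ∀ i, MemLp (T i) 2 P := fun i => (hTtop i).mono_exponent le_top
  have hTWL2 : ∀ i, MemLp (fun ω => T i ω * W ω i) 2 P := fun i =>
    (hWL2 i).smul (hTtop i)
  -- cross term identities
  have hMTi : ∀ i, ∫ ω, M ω * (T i ω * W ω i) ∂P = h * ∫ ω, T i ω * ζ i ω ∂P := by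
    intro i
    have hMWint : Integrable (fun ω => M ω * W ω i) P := intL2 hML2 (hWL2 i)
    have hTMW : Integrable (fun ω => T i ω * (M ω * W ω i)) P :=
      hMWint.bdd_mul ((hTm i).mono hm).aestronglyMeasurable (Filter.Eventually.of_forall (hTabs i))
    have e1 : ∫ ω, M ω * (T i ω * W ω i) ∂P = ∫ ω, T i ω * (M ω * W ω i) ∂P :=
      integral_congr_ae (Filter.Eventually.of_forall fun ω => by ring)
    rw [e1, integral_mul_condExp hm (hTm i) hTMW hMWint]
    have e2 : (fun ω => T i ω * (P[(fun ω => M ω * W ω i)|m]) ω)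
        =ᵐ[P] fun ω => h * (T i ω * ζ i ω) := by
      filter_upwards [hMW i] with ω hω
      rw [hω]; ring
    rw [integral_congr_ae e2, integral_const_mul]
  have hTij : ∀ i j, ∫ ω, (T i ω * W ω i) * (T j ω * W ω j) ∂P
      = (if i = j then h else 0) * ∫ ω, T i ω * T j ω ∂P := by
    intro i j
    have hWW : Integrable (fun ω => W ω i * W ω j) P := intL2 (hWL2 i) (hWL2 j)
    have hTT : StronglyMeasurable[m] (fun ω => T i ω * T j ω) := (hTm i).mul (hTm j)
    have hTTWW : Integrable (fun ω => (T i ω * T j ω) * (W ω i * W ω j)) P :=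
      hWW.bdd_mul (hTT.mono hm).aestronglyMeasurable
        (Filter.Eventually.of_forall fun ω => by
          rw [norm_mul]
          exact mul_le_mul (hTabs i ω) (hTabs j ω) (norm_nonneg _) hK)
    have e1 : ∫ ω, (T i ω * W ω i) * (T j ω * W ω j) ∂P
        = ∫ ω, (T i ω * T j ω) * (W ω i * W ω j) ∂P :=
      integral_congr_ae (Filter.Eventually.of_forall fun ω => by ring)
    rw [e1, integral_mul_condExp hm hTT hTTWW hWW]
    have e2 : (fun ω => (T i ω * T j ω) * (P[(fun ω => W ω i * W ω j)|m]) ω)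
        =ᵐ[P] fun ω => (if i = j then h else 0) * (T i ω * T j ω) := by
      filter_upwards [hWcov i j] with ω hω
      rw [hω]; ring
    rw [integral_congr_ae e2, integral_const_mul]
  -- expansion of the nonnegative square
  have hintMu : ∀ i, Integrable (fun ω => M ω * (T i ω * W ω i)) P := fun i =>
    intL2 hML2 (hTWL2 i)
  have hintuu : ∀ i j, Integrable (fun ω => (T i ω * W ω i) * (T j ω * W ω j)) P :=
    fun i j => intL2 (hTWL2 i) (hTWL2 j)
  have hintM2 : Integrable (fun ω => M ω ^ 2) P := sqInt hML2
  have hintMS : Integrable (fun ω => ∑ i, M ω * (T i ω * W ω i)) P :=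
    integrable_finset_sum _ fun i _ => hintMu i
  have hintSS : Integrable (fun ω => ∑ i, ∑ j, (T i ω * W ω i) * (T j ω * W ω j)) P :=
    integrable_finset_sum _ fun i _ => integrable_finset_sum _ fun j _ => hintuu i j
  have h0le : (0:ℝ) ≤ ∫ ω, (M ω - ∑ i, T i ω * W ω i) ^ 2 ∂P :=
    integral_nonneg fun ω => sq_nonneg _
  have hexp : ∫ ω, (M ω - ∑ i, T i ω * W ω i) ^ 2 ∂P
      = (∫ ω, M ω ^ 2 ∂P) - 2 * (∫ ω, ∑ i, M ω * (T i ω * W ω i) ∂P)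
        + ∫ ω, ∑ i, ∑ j, (T i ω * W ω i) * (T j ω * W ω j) ∂P := by
    have hsub : Integrable (fun ω => M ω ^ 2 - 2 * ∑ i, M ω * (T i ω * W ω i)) P :=
      hintM2.sub (hintMS.const_mul 2)
    have e0 : (fun ω => (M ω - ∑ i, T i ω * W ω i) ^ 2)
        = fun ω => (M ω ^ 2 - 2 * ∑ i, M ω * (T i ω * W ω i))
            + ∑ i, ∑ j, (T i ω * W ω i) * (T j ω * W ω j) := by
      funext ω
      have h1 : (∑ i, T i ω * W ω i) ^ 2
          = ∑ i, ∑ j, (T i ω * W ω i) * (T j ω * W ω j) := by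
        rw [sq, Finset.sum_mul_sum]
      have h2 : M ω * (∑ i, T i ω * W ω i) = ∑ i, M ω * (T i ω * W ω i) :=
        Finset.mul_sum _ _ _
      rw [← h1, ← h2]; ring
    rw [e0, integral_add hsub hintSS, integral_sub hintM2 (hintMS.const_mul 2),
      integral_const_mul]
  have hMSval : ∫ ω, ∑ i, M ω * (T i ω * W ω i) ∂P = ∑ i, h * ∫ ω, T i ω * ζ i ω ∂P := by
    rw [integral_finset_sum _ fun i _ => hintMu i]
    exact Finset.sum_congr rfl fun i _ => hMTi i
  have hSSval : ∫ ω, ∑ i, ∑ j, (T i ω * W ω i) * (T j ω * W ω j) ∂P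
      = ∑ i, h * ∫ ω, T i ω * T i ω ∂P := by
    rw [integral_finset_sum _ fun i _ =>
      (integrable_finset_sum _ fun j _ => hintuu i j :
        Integrable (fun ω => ∑ j, (T i ω * W ω i) * (T j ω * W ω j)) P)]
    refine Finset.sum_congr rfl fun i _ => ?_
    rw [integral_finset_sum _ fun j _ => hintuu i j]
    have : ∀ j : Fin d, ∫ ω, (T i ω * W ω i) * (T j ω * W ω j) ∂P
        = if i = j then h * ∫ ω, T i ω * T j ω ∂P else 0 := by
      intro j
      rw [hTij i j]
      by_cases hij : i = j
      · simp [hij]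
      · simp [hij]
    rw [Finset.sum_congr rfl fun j _ => this j, Finset.sum_ite_eq Finset.univ i
      (fun j => h * ∫ ω, T i ω * T j ω ∂P), if_pos (Finset.mem_univ i)]
  have hTζint : ∀ i, Integrable (fun ω => T i ω * ζ i ω) P := fun i =>
    (hζint i).bdd_mul ((hTm i).mono hm).aestronglyMeasurable (Filter.Eventually.of_forall (hTabs i))
  have hTsq : ∀ i, ∫ ω, T i ω ^ 2 ∂P ≤ ∫ ω, T i ω * ζ i ω ∂P := fun i =>
    integral_mono (sqInt (hTL2 i)) (hTζint i) fun ω => hTζ i ω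
  have hsum1 : ∑ i, h * ∫ ω, T i ω ^ 2 ∂P ≤ ∑ i, h * ∫ ω, T i ω * ζ i ω ∂P :=
    Finset.sum_le_sum fun i _ => mul_le_mul_of_nonneg_left (hTsq i) hh.le
  have hsq_eq : ∀ i, ∫ ω, T i ω * T i ω ∂P = ∫ ω, T i ω ^ 2 ∂P :=
    fun i => integral_congr_ae (Filter.Eventually.of_forall fun ω => (sq (T i ω)).symm)
  have hfin : ∫ ω, ∑ i, T i ω ^ 2 ∂P = ∑ i, ∫ ω, T i ω ^ 2 ∂P :=
    integral_finset_sum _ fun i _ => sqInt (hTL2 i)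
  have key : h * ∑ i, ∫ ω, T i ω ^ 2 ∂P ≤ ∫ ω, M ω ^ 2 ∂P := by
    have e1 : ∑ i, h * ∫ ω, T i ω * T i ω ∂P = ∑ i, h * ∫ ω, T i ω ^ 2 ∂P :=
      Finset.sum_congr rfl fun i _ => by rw [hsq_eq i]
    have := h0le
    rw [hexp, hMSval, hSSval, e1] at this
    have e2 : ∑ i, h * ∫ ω, T i ω ^ 2 ∂P = h * ∑ i, ∫ ω, T i ω ^ 2 ∂P :=
      (Finset.mul_sum _ _ _).symm
    have e3 : ∑ i, h * ∫ ω, T i ω * ζ i ω ∂P ≥ h * ∑ i, ∫ ω, T i ω ^ 2 ∂P := by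
      rw [← e2]; exact hsum1
    linarith
  rw [hfin]
  exact key

lemma zbound {m : MeasurableSpace Ω} (hm : m ≤ m0) (h : ℝ) (hh : 0 < h) (d : ℕ)
    (W : Ω → Fin d → ℝ) (hWL2 : ∀ i, MemLp (fun ω => W ω i) 2 P)
    (hWcov : ∀ i j, P[(fun ω => W ω i * W ω j)|m] =ᵐ[P] fun _ => if i = j then h else 0)
    (M : Ω → ℝ) (hML2 : MemLp M 2 P)
    (ζ : Fin d → Ω → ℝ) (hζm : ∀ i, StronglyMeasurable[m] (ζ i))
    (hζint : ∀ i, Integrable (ζ i) P)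
    (hMW : ∀ i, P[(fun ω => M ω * W ω i)|m] =ᵐ[P] fun ω => h * ζ i ω) :
    Integrable (fun ω => ∑ i, ζ i ω ^ 2) P ∧
      h * ∫ ω, ∑ i, ζ i ω ^ 2 ∂P ≤ ∫ ω, M ω ^ 2 ∂P := by
  have hKb : ∀ K : ℕ,
      h * ∫ ω, ∑ i, (max (min (ζ i ω) (K:ℝ)) (-(K:ℝ))) ^ 2 ∂P ≤ ∫ ω, M ω ^ 2 ∂P := by
    intro K
    exact zbound_trunc hm h hh d W hWL2 hWcov M hML2 ζ hζm hζint hMW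
      (fun i ω => max (min (ζ i ω) (K:ℝ)) (-(K:ℝ))) (K:ℝ) (Nat.cast_nonneg K)
      (fun i => Measurable.stronglyMeasurable
        (((hζm i).measurable.min measurable_const).max measurable_const))
      (fun i ω => by rw [Real.norm_eq_abs]; exact trunc_abs_le _ _ (Nat.cast_nonneg K))
      (fun i ω => trunc_sq_le _ _ (Nat.cast_nonneg K))
  have hζmeas : ∀ i, Measurable[m0] (ζ i) := fun i => ((hζm i).mono hm).measurable
  have hFmeas : ∀ K : ℕ,
      Measurable[m0] fun ω => ∑ i, (max (min (ζ i ω) (K:ℝ)) (-(K:ℝ))) ^ 2 := fun K =>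
    Finset.measurable_sum _ fun i _ =>
      ((((hζmeas i).min measurable_const).max measurable_const).pow_const 2)
  have hGmeas : Measurable[m0] fun ω => ∑ i, ζ i ω ^ 2 :=
    Finset.measurable_sum _ fun i _ => ((hζmeas i).pow_const 2)
  have hFnn : ∀ (K : ℕ) (ω : Ω), 0 ≤ ∑ i, (max (min (ζ i ω) (K:ℝ)) (-(K:ℝ))) ^ 2 :=
    fun K ω => Finset.sum_nonneg fun i _ => sq_nonneg _
  have hGnn : ∀ ω, 0 ≤ ∑ i, ζ i ω ^ 2 := fun ω => Finset.sum_nonneg fun i _ => sq_nonneg _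
  have hM2nn : (0:ℝ) ≤ ∫ ω, M ω ^ 2 ∂P := integral_nonneg fun ω => sq_nonneg _
  have hFint : ∀ K : ℕ,
      Integrable (fun ω => ∑ i, (max (min (ζ i ω) (K:ℝ)) (-(K:ℝ))) ^ 2) P := by
    intro K
    refine Integrable.mono' (integrable_const ((d:ℝ) * (K:ℝ) ^ 2))
      (hFmeas K).aestronglyMeasurable (Filter.Eventually.of_forall fun ω => ?_)
    rw [Real.norm_eq_abs, abs_of_nonneg (hFnn K ω)]
    calc ∑ i, (max (min (ζ i ω) (K:ℝ)) (-(K:ℝ))) ^ 2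
        ≤ ∑ _i : Fin d, (K:ℝ) ^ 2 := Finset.sum_le_sum fun i _ => by
          rw [trunc_sq_eq _ _ (Nat.cast_nonneg K)]; exact min_le_right _ _
      _ = (d:ℝ) * (K:ℝ) ^ 2 := by
          rw [Finset.sum_const, Finset.card_univ, Fintype.card_fin, nsmul_eq_mul]
  have hlsup : ∀ ω, (⨆ K : ℕ, ENNReal.ofReal
        (∑ i, (max (min (ζ i ω) (K:ℝ)) (-(K:ℝ))) ^ 2))
      = ENNReal.ofReal (∑ i, ζ i ω ^ 2) := by
    intro ω
    apply le_antisymm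
    · refine iSup_le fun K => ENNReal.ofReal_le_ofReal
        (Finset.sum_le_sum fun i _ => ?_)
      rw [trunc_sq_eq _ _ (Nat.cast_nonneg K)]
      exact min_le_left _ _
    · have hbound : ∀ i : Fin d, ζ i ω ^ 2 ≤ ((⌈∑ j, |ζ j ω|⌉₊ : ℝ)) ^ 2 := by
        intro i
        have h1 : |ζ i ω| ≤ ((⌈∑ j, |ζ j ω|⌉₊ : ℝ)) :=
          le_trans (Finset.single_le_sum (fun j _ => abs_nonneg (ζ j ω))
            (Finset.mem_univ i)) (Nat.le_ceil _)
        calc ζ i ω ^ 2 = |ζ i ω| ^ 2 := (sq_abs _).symm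
          _ ≤ ((⌈∑ j, |ζ j ω|⌉₊ : ℝ)) ^ 2 := by
              exact pow_le_pow_left₀ (abs_nonneg _) h1 2
      have heq : ∑ i, (max (min (ζ i ω) ((⌈∑ j, |ζ j ω|⌉₊ : ℝ)))
            (-((⌈∑ j, |ζ j ω|⌉₊ : ℝ)))) ^ 2 = ∑ i, ζ i ω ^ 2 :=
        Finset.sum_congr rfl fun i _ => by
          rw [trunc_sq_eq _ _ (Nat.cast_nonneg _), min_eq_left (hbound i)]
      exact le_iSup_of_le ⌈∑ j, |ζ j ω|⌉₊ (le_of_eq (by rw [heq]))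
  have hmono : Monotone fun K : ℕ => fun ω =>
      ENNReal.ofReal (∑ i, (max (min (ζ i ω) (K:ℝ)) (-(K:ℝ))) ^ 2) := by
    intro K K' hKK' ω
    refine ENNReal.ofReal_le_ofReal (Finset.sum_le_sum fun i _ => ?_)
    rw [trunc_sq_eq _ _ (Nat.cast_nonneg K), trunc_sq_eq _ _ (Nat.cast_nonneg K')]
    exact min_le_min le_rfl (pow_le_pow_left₀ (Nat.cast_nonneg K) (Nat.cast_le.mpr hKK') 2)
  have hls : ∫⁻ ω, ENNReal.ofReal (∑ i, ζ i ω ^ 2) ∂P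
      = ⨆ K : ℕ, ∫⁻ ω, ENNReal.ofReal
          (∑ i, (max (min (ζ i ω) (K:ℝ)) (-(K:ℝ))) ^ 2) ∂P := by
    rw [← lintegral_iSup (μ := P) (fun K => (hFmeas K).ennreal_ofReal) hmono]
    exact lintegral_congr fun ω => (hlsup ω).symm
  have hub : ∀ K : ℕ, (∫⁻ ω, ENNReal.ofReal
        (∑ i, (max (min (ζ i ω) (K:ℝ)) (-(K:ℝ))) ^ 2) ∂P)
      ≤ ENNReal.ofReal ((∫ ω, M ω ^ 2 ∂P) / h) := by
    intro K
    rw [← ofReal_integral_eq_lintegral_ofReal (hFint K)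
      (Filter.Eventually.of_forall (hFnn K))]
    apply ENNReal.ofReal_le_ofReal
    rw [le_div_iff₀ hh]
    linarith [hKb K]
  have hfin : ∫⁻ ω, ENNReal.ofReal (∑ i, ζ i ω ^ 2) ∂P
      ≤ ENNReal.ofReal ((∫ ω, M ω ^ 2 ∂P) / h) := by
    rw [hls]; exact iSup_le hub
  have hGint : Integrable (fun ω => ∑ i, ζ i ω ^ 2) P := by
    refine ⟨hGmeas.aestronglyMeasurable, ?_⟩
    rw [hasFiniteIntegral_iff_ofReal (Filter.Eventually.of_forall hGnn)]
    exact lt_of_le_of_lt hfin ENNReal.ofReal_lt_top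
  refine ⟨hGint, ?_⟩
  have h1 : ∫ ω, ∑ i, ζ i ω ^ 2 ∂P
      = (∫⁻ ω, ENNReal.ofReal (∑ i, ζ i ω ^ 2) ∂P).toReal :=
    integral_eq_lintegral_of_nonneg_ae (Filter.Eventually.of_forall hGnn)
      hGmeas.aestronglyMeasurable
  have h2 : ∫ ω, ∑ i, ζ i ω ^ 2 ∂P ≤ (∫ ω, M ω ^ 2 ∂P) / h := by
    rw [h1]
    have h3 := ENNReal.toReal_mono ENNReal.ofReal_ne_top hfin
    rwa [ENNReal.toReal_ofReal (div_nonneg hM2nn hh.le)] at h3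
  rw [le_div_iff₀ hh] at h2
  linarith

lemma step {m : MeasurableSpace Ω} (hm : m ≤ m0) (h : ℝ) (hh : 0 < h) (d : ℕ)
    (W : Ω → Fin d → ℝ)
    (hWL2 : ∀ i, MemLp (fun ω => W ω i) 2 P)
    (hW0 : ∀ i, P[(fun ω => W ω i)|m] =ᵐ[P] 0)
    (hWcov : ∀ i j, P[(fun ω => W ω i * W ω j)|m] =ᵐ[P] fun _ => if i = j then h else 0)
    (dY Y' df φ ψ : Ω → ℝ) (Z : Ω → Fin d → ℝ)
    (hdYL2 : MemLp dY 2 P)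
    (hY'L2 : MemLp Y' 2 P)
    (hdfL2 : MemLp df 2 P)
    (hφL2 : MemLp φ 2 P) (hψL2 : MemLp ψ 2 P)
    (hstep : dY =ᵐ[P] fun ω => (P[Y'|m]) ω + h * df ω)
    (hZeq : ∀ i, (fun ω => Z ω i)
      =ᵐ[P] fun ω => h⁻¹ * (P[(fun ω' => Y' ω' * W ω' i)|m]) ω)
    (hfφψ : df =ᵐ[P] fun ω => φ ω + ψ ω)
    (k_y L_f L_v e lam : ℝ) (hlam : 0 < lam) (hlamLf : L_f ≤ lam)
    (hφbd : ∫ ω, φ ω * dY ω ∂P ≤ k_y * ∫ ω, dY ω ^ 2 ∂P)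
    (hψbd : ∫ ω, ψ ω ^ 2 ∂P ≤ L_v * e + L_f * ∫ ω, ∑ i, Z ω i ^ 2 ∂P) :
    (1 - h * (2 * k_y + lam)) * ∫ ω, dY ω ^ 2 ∂P
      ≤ (∫ ω, Y' ω ^ 2 ∂P) + h * L_v * lam⁻¹ * e := by
  haveI : SigmaFinite (P.trim hm) := inferInstance
  have hY'int : Integrable Y' P := hY'L2.integrable one_le_two
  have hE'm : StronglyMeasurable[m] (P[Y'|m]) := stronglyMeasurable_condExp
  have hE'int : Integrable (P[Y'|m]) P := integrable_condExp
  have hE'ae : (P[Y'|m]) =ᵐ[P] fun ω => dY ω - h * df ω := by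
    filter_upwards [hstep] with ω hω
    rw [hω]; ring
  have hE'L2 : MemLp (P[Y'|m]) 2 P := by
    refine MemLp.ae_eq hE'ae.symm ?_
    exact hdYL2.sub (hdfL2.const_mul h)
  have hML2 : MemLp (fun ω => Y' ω - (P[Y'|m]) ω) 2 P := hY'L2.sub hE'L2
  have hMint : Integrable (fun ω => Y' ω - (P[Y'|m]) ω) P := hML2.integrable one_le_two
  -- conditional expectation of the martingale part vanishes
  have hMcond : P[(fun ω => Y' ω - (P[Y'|m]) ω)|m] =ᵐ[P] 0 := by
    have h1 : P[(fun ω => Y' ω - (P[Y'|m]) ω)|m]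
        =ᵐ[P] P[Y'|m] - P[(P[Y'|m])|m] := condExp_sub hY'int hE'int _
    rw [condExp_of_stronglyMeasurable hm hE'm hE'int] at h1
    filter_upwards [h1] with ω hω
    simpa using hω
  -- Pythagoras
  have hEM0 : ∫ ω, (P[Y'|m]) ω * (Y' ω - (P[Y'|m]) ω) ∂P = 0 := by
    rw [integral_mul_condExp hm hE'm (intL2 hE'L2 hML2) hMint]
    have : (fun ω => (P[Y'|m]) ω * (P[(fun ω => Y' ω - (P[Y'|m]) ω)|m]) ω)
        =ᵐ[P] fun _ => (0:ℝ) := by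
      filter_upwards [hMcond] with ω hω
      simp [hω]
    rw [integral_congr_ae this, integral_const]
    simp
  have hPyth : ∫ ω, Y' ω ^ 2 ∂P
      = (∫ ω, (P[Y'|m]) ω ^ 2 ∂P) + ∫ ω, (Y' ω - (P[Y'|m]) ω) ^ 2 ∂P := by
    have hint1 : Integrable (fun ω => (P[Y'|m]) ω ^ 2) P := sqInt hE'L2
    have hint2 : Integrable (fun ω => (Y' ω - (P[Y'|m]) ω) ^ 2) P := sqInt hML2
    have hint3 : Integrable (fun ω => 2 * ((P[Y'|m]) ω * (Y' ω - (P[Y'|m]) ω))) P :=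
      (intL2 hE'L2 hML2).const_mul 2
    have hint12 : Integrable (fun ω => (P[Y'|m]) ω ^ 2 + (Y' ω - (P[Y'|m]) ω) ^ 2) P :=
      hint1.add hint2
    have e1 : (fun ω => Y' ω ^ 2)
        = fun ω => ((P[Y'|m]) ω ^ 2 + (Y' ω - (P[Y'|m]) ω) ^ 2)
            + 2 * ((P[Y'|m]) ω * (Y' ω - (P[Y'|m]) ω)) := by
      funext ω; ring
    rw [e1, integral_add hint12 hint3, integral_add hint1 hint2,
      integral_const_mul, hEM0]
    ring
  -- conditional expectation of M * W i
  have hMW : ∀ i, P[(fun ω => (Y' ω - (P[Y'|m]) ω) * W ω i)|m]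
      =ᵐ[P] fun ω => h * (h⁻¹ * (P[(fun ω' => Y' ω' * W ω' i)|m]) ω) := by
    intro i
    have hi1 : Integrable (fun ω => Y' ω * W ω i) P := intL2 hY'L2 (hWL2 i)
    have hi2 : Integrable (fun ω => (P[Y'|m]) ω * W ω i) P := intL2 hE'L2 (hWL2 i)
    have he : (fun ω => (Y' ω - (P[Y'|m]) ω) * W ω i)
        =ᵐ[P] (fun ω => Y' ω * W ω i) - fun ω => (P[Y'|m]) ω * W ω i :=
      Filter.Eventually.of_forall (fun ω => by simp [Pi.sub_apply]; ring)
    have h1 : P[(fun ω => (Y' ω - (P[Y'|m]) ω) * W ω i)|m]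
        =ᵐ[P] P[(fun ω => Y' ω * W ω i)|m] - P[(fun ω => (P[Y'|m]) ω * W ω i)|m] :=
      (condExp_congr_ae he).trans (condExp_sub hi1 hi2 _)
    have h2 : P[(fun ω => (P[Y'|m]) ω * W ω i)|m]
        =ᵐ[P] fun ω => (P[Y'|m]) ω * (P[(fun ω => W ω i)|m]) ω :=
      condExp_mul_of_stronglyMeasurable_left hE'm hi2 ((hWL2 i).integrable one_le_two)
    filter_upwards [h1, h2, hW0 i] with ω e1 e2 e0
    rw [e1, Pi.sub_apply, e2, e0]
    rw [mul_inv_cancel_left₀ hh.ne']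
    simp
  -- Z bound
  obtain ⟨hGint, hGle⟩ := zbound hm h hh d W hWL2 hWcov _ hML2
    (fun i ω => h⁻¹ * (P[(fun ω' => Y' ω' * W ω' i)|m]) ω)
    (fun i => stronglyMeasurable_condExp.const_mul _)
    (fun i => integrable_condExp.const_mul _) hMW
  have hZG : ∫ ω, ∑ i, Z ω i ^ 2 ∂P
      = ∫ ω, ∑ i, (h⁻¹ * (P[(fun ω' => Y' ω' * W ω' i)|m]) ω) ^ 2 ∂P := by
    refine integral_congr_ae ?_
    have hall : ∀ᵐ ω ∂P, ∀ i : Fin d, Z ω i = h⁻¹ * (P[(fun ω' => Y' ω' * W ω' i)|m]) ω :=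
      ae_all_iff.mpr fun i => hZeq i
    filter_upwards [hall] with ω hω
    exact Finset.sum_congr rfl fun i _ => by rw [hω i]
  -- expansion of E'^2
  have hE'sq : ∫ ω, (P[Y'|m]) ω ^ 2 ∂P
      = (∫ ω, dY ω ^ 2 ∂P) - 2 * h * (∫ ω, dY ω * df ω ∂P)
        + h ^ 2 * ∫ ω, df ω ^ 2 ∂P := by
    have hce : (fun ω => (P[Y'|m]) ω ^ 2)
        =ᵐ[P] fun ω => (dY ω ^ 2 - 2 * h * (dY ω * df ω)) + h ^ 2 * df ω ^ 2 := by
      filter_upwards [hE'ae] with ω hω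
      rw [hω]; ring
    have i1 : Integrable (fun ω => dY ω ^ 2) P := sqInt hdYL2
    have i2 : Integrable (fun ω => 2 * h * (dY ω * df ω)) P := (intL2 hdYL2 hdfL2).const_mul _
    have i3 : Integrable (fun ω => h ^ 2 * df ω ^ 2) P := (sqInt hdfL2).const_mul _
    have i12 : Integrable (fun ω => dY ω ^ 2 - 2 * h * (dY ω * df ω)) P := i1.sub i2
    rw [integral_congr_ae hce, integral_add i12 i3, integral_sub i1 i2,
      integral_const_mul, integral_const_mul]
  have hYf : ∫ ω, dY ω * df ω ∂P = (∫ ω, φ ω * dY ω ∂P) + ∫ ω, ψ ω * dY ω ∂P := by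
    have hce : (fun ω => dY ω * df ω) =ᵐ[P] fun ω => φ ω * dY ω + ψ ω * dY ω := by
      filter_upwards [hfφψ] with ω hω
      rw [hω]; ring
    rw [integral_congr_ae hce, integral_add (intL2 hφL2 hdYL2) (intL2 hψL2 hdYL2)]
  have hψY : ∫ ω, ψ ω * dY ω ∂P
      ≤ lam / 2 * (∫ ω, dY ω ^ 2 ∂P) + (2 * lam)⁻¹ * ∫ ω, ψ ω ^ 2 ∂P := by
    have hpt : ∀ ω, ψ ω * dY ω ≤ lam / 2 * dY ω ^ 2 + (2 * lam)⁻¹ * ψ ω ^ 2 := by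
      intro ω
      have h2l : (2 * lam) * (2 * lam)⁻¹ = 1 := mul_inv_cancel₀ (by positivity)
      nlinarith [sq_nonneg (lam * dY ω - ψ ω), sq_nonneg (ψ ω), hlam]
    have iR : Integrable (fun ω => lam / 2 * dY ω ^ 2 + (2 * lam)⁻¹ * ψ ω ^ 2) P :=
      ((sqInt hdYL2).const_mul _).add ((sqInt hψL2).const_mul _)
    calc ∫ ω, ψ ω * dY ω ∂P
        ≤ ∫ ω, (lam / 2 * dY ω ^ 2 + (2 * lam)⁻¹ * ψ ω ^ 2) ∂P :=
          integral_mono (intL2 hψL2 hdYL2) iR hpt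
      _ = lam / 2 * (∫ ω, dY ω ^ 2 ∂P) + (2 * lam)⁻¹ * ∫ ω, ψ ω ^ 2 ∂P := by
          rw [integral_add ((sqInt hdYL2).const_mul _) ((sqInt hψL2).const_mul _),
            integral_const_mul, integral_const_mul]
  -- final assembly
  set zz := ∫ ω, ∑ i, (h⁻¹ * (P[(fun ω' => Y' ω' * W ω' i)|m]) ω) ^ 2 ∂P with hzzdef
  have zznn : (0:ℝ) ≤ zz := by
    rw [hzzdef]
    exact integral_nonneg fun ω => Finset.sum_nonneg fun i _ => sq_nonneg _
  have k1 : (0:ℝ) ≤ h ^ 2 * ∫ ω, df ω ^ 2 ∂P :=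
    mul_nonneg (sq_nonneg h) (integral_nonneg fun ω => sq_nonneg _)
  have k4 : 2 * h * (∫ ω, dY ω * df ω ∂P)
      = 2 * h * (∫ ω, φ ω * dY ω ∂P) + 2 * h * (∫ ω, ψ ω * dY ω ∂P) := by
    rw [hYf]; ring
  have k5 : 2 * h * (∫ ω, φ ω * dY ω ∂P) ≤ 2 * h * (k_y * ∫ ω, dY ω ^ 2 ∂P) :=
    mul_le_mul_of_nonneg_left hφbd (by positivity)
  have k6 : 2 * h * (∫ ω, ψ ω * dY ω ∂P)
      ≤ 2 * h * (lam / 2 * (∫ ω, dY ω ^ 2 ∂P) + (2 * lam)⁻¹ * ∫ ω, ψ ω ^ 2 ∂P) :=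
    mul_le_mul_of_nonneg_left hψY (by positivity)
  have k7 : 2 * h * (lam / 2 * (∫ ω, dY ω ^ 2 ∂P) + (2 * lam)⁻¹ * ∫ ω, ψ ω ^ 2 ∂P)
      = h * lam * (∫ ω, dY ω ^ 2 ∂P) + h * lam⁻¹ * ∫ ω, ψ ω ^ 2 ∂P := by
    field_simp
  have k8 : ∫ ω, ψ ω ^ 2 ∂P ≤ L_v * e + L_f * zz := by
    rw [← hZG]
    exact hψbd
  have k9 : h * lam⁻¹ * (∫ ω, ψ ω ^ 2 ∂P) ≤ h * lam⁻¹ * (L_v * e + L_f * zz) :=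
    mul_le_mul_of_nonneg_left k8 (by positivity)
  have hinv1 : lam⁻¹ * L_f ≤ 1 := by
    rw [← inv_mul_cancel₀ hlam.ne']
    exact mul_le_mul_of_nonneg_left hlamLf (inv_nonneg.mpr hlam.le)
  have k10 : h * lam⁻¹ * (L_v * e + L_f * zz)
      = h * L_v * lam⁻¹ * e + (lam⁻¹ * L_f) * (h * zz) := by ring
  have k11 : (lam⁻¹ * L_f) * (h * zz) ≤ 1 * (h * zz) :=
    mul_le_mul_of_nonneg_right hinv1 (mul_nonneg hh.le zznn)
  linarith [hPyth, hE'sq, k1, k4, k5, k6, k7, k9, k10, k11, hGle]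

end DYAux

open DYAux in
/-- Discrete Grönwall bound for `E[(δY_n)²]`: if `λ ≥ L_f`,
`2k_y + λ ≥ 0` and `h·(2k_y + λ) < 1`, then with `A = (1 − h·(2k_y + λ))⁻¹`, for every
`n ≤ N`, `E[(δY_n)²] ≤ A^N·E[(δY_N)²] + N·h·L_v·λ⁻¹·A^N·max_{k<N} ε_k`. -/
theorem deltaY_bound_discrete_scheme
    {Ω : Type} [MeasurableSpace Ω] (P : Measure Ω) [IsProbabilityMeasure P]
    (N : ℕ) (hN : 1 ≤ N) (h : ℝ) (hh : 0 < h) (d : ℕ) (hd : 1 ≤ d)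
    (𝒢 : Filtration ℕ (inferInstance : MeasurableSpace Ω))
    (ΔW : ℕ → Ω → Fin d → ℝ)
    (Y1 Y2 : ℕ → Ω → ℝ) (Z1 Z2 : ℕ → Ω → Fin d → ℝ) (f1 f2 : ℕ → Ω → ℝ)
    (k_y L_f L_v : ℝ) (hLf : 0 ≤ L_f) (hLv : 0 ≤ L_v) (ε : ℕ → ℝ)
    (hε : ∀ n < N, 0 ≤ ε n)
    (hInc : IncrementsOK P N d h 𝒢 ΔW)
    (hSol1 : SolvesScheme P N d h 𝒢 ΔW Y1 Z1 f1)
    (hSol2 : SolvesScheme P N d h 𝒢 ΔW Y2 Z2 f2)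
    (hDrv : DriverDiff P N d 𝒢 k_y L_f L_v ε Y1 Y2 Z1 Z2 f1 f2)
    (lam : ℝ) (hlam : 0 < lam) (hlamLf : L_f ≤ lam) (hlamky : 0 ≤ 2 * k_y + lam)
    (hsmall : h * (2 * k_y + lam) < 1)
    (A : ℝ) (hA : A = (1 - h * (2 * k_y + lam))⁻¹) :
    ∀ n ≤ N,
      (∫ ω, (Y1 n ω - Y2 n ω) ^ 2 ∂P)
        ≤ A ^ N * (∫ ω, (Y1 N ω - Y2 N ω) ^ 2 ∂P)
          + N * h * L_v * lam⁻¹ * A ^ N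
            * (Finset.range N).sup'
                (nonempty_range_iff.mpr (Nat.one_le_iff_ne_zero.mp hN)) ε := by
  obtain ⟨hY1L2, hY1m, hf1L2, hf1m, hY1e, hZ1e⟩ := hSol1
  obtain ⟨hY2L2, hY2m, hf2L2, hf2m, hY2e, hZ2e⟩ := hSol2
  have hD : 0 < 1 - h * (2 * k_y + lam) := by linarith
  have hApos : 0 < A := hA ▸ inv_pos.mpr hD
  have hAD : A * (1 - h * (2 * k_y + lam)) = 1 := by
    rw [hA]; field_simp
  have hDle1 : 1 - h * (2 * k_y + lam) ≤ 1 := by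
    have : 0 ≤ h * (2 * k_y + lam) := mul_nonneg hh.le hlamky
    linarith
  have hA1 : 1 ≤ A := by nlinarith [mul_nonneg hApos.le (by linarith :
    (0:ℝ) ≤ 1 - (1 - h * (2 * k_y + lam)))]
  set Mx := (Finset.range N).sup'
      (Finset.nonempty_range_iff.mpr (Nat.one_le_iff_ne_zero.mp hN)) ε with hMxdef
  have hMxb : ∀ k < N, ε k ≤ Mx := fun k hk =>
    Finset.le_sup' ε (Finset.mem_range.mpr hk)
  have hN0 : 0 < N := hN
  have hMx0 : 0 ≤ Mx := le_trans (hε 0 hN0) (hMxb 0 hN0)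
  set C := h * L_v * lam⁻¹ with hCdef
  have hC0 : 0 ≤ C := by
    rw [hCdef]; positivity
  -- one-step inequality
  have key : ∀ n, n < N →
      (1 - h * (2 * k_y + lam)) * ∫ ω, (Y1 n ω - Y2 n ω) ^ 2 ∂P
        ≤ (∫ ω, (Y1 (n+1) ω - Y2 (n+1) ω) ^ 2 ∂P) + C * ε n := by
    intro n hn
    have hsucc : n + 1 ≤ N := hn
    obtain ⟨hWm, hWL2, hW0, hWcov⟩ := hInc n hn
    obtain ⟨φ, ψ, hφm, hψm, hφL2, hψL2, hfae, hφbd, hψbd⟩ := hDrv n hn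
    have hY1'int : Integrable (Y1 (n+1)) P := (hY1L2 _ hsucc).integrable one_le_two
    have hY2'int : Integrable (Y2 (n+1)) P := (hY2L2 _ hsucc).integrable one_le_two
    have hstepn : (fun ω => Y1 n ω - Y2 n ω) =ᵐ[P]
        fun ω => (P[(Y1 (n+1) - Y2 (n+1)) | 𝒢 n]) ω + h * (f1 n ω - f2 n ω) := by
      have s3 : P[(Y1 (n+1) - Y2 (n+1)) | 𝒢 n]
          =ᵐ[P] P[Y1 (n+1) | 𝒢 n] - P[Y2 (n+1) | 𝒢 n] := condExp_sub hY1'int hY2'int _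
      filter_upwards [hY1e n hn, hY2e n hn, s3] with ω e1 e2 e3
      simp only [Pi.sub_apply] at e3
      linear_combination e1 - e2 - e3
    have hZeqn : ∀ i, (fun ω => Z1 n ω i - Z2 n ω i) =ᵐ[P]
        fun ω => h⁻¹ * (P[(fun ω' => (Y1 (n+1) - Y2 (n+1)) ω' * ΔW n ω' i) | 𝒢 n]) ω := by
      intro i
      have q3 : P[(fun ω' => (Y1 (n+1) - Y2 (n+1)) ω' * ΔW n ω' i) | 𝒢 n]
          =ᵐ[P] P[(fun ω' => Y1 (n+1) ω' * ΔW n ω' i) | 𝒢 n]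
            - P[(fun ω' => Y2 (n+1) ω' * ΔW n ω' i) | 𝒢 n] := by
        have he : (fun ω' => (Y1 (n+1) - Y2 (n+1)) ω' * ΔW n ω' i)
            =ᵐ[P] (fun ω' => Y1 (n+1) ω' * ΔW n ω' i)
              - fun ω' => Y2 (n+1) ω' * ΔW n ω' i :=
          Filter.Eventually.of_forall fun ω => by
            simp only [Pi.sub_apply]; ring
        exact (condExp_congr_ae he).trans
          (condExp_sub (intL2 (hY1L2 _ hsucc) (hWL2 i)) (intL2 (hY2L2 _ hsucc) (hWL2 i)) _)
      filter_upwards [hZ1e n hn i, hZ2e n hn i, q3] with ω e1 e2 e3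
      simp only [Pi.sub_apply] at e3
      linear_combination e1 - e2 - h⁻¹ * e3
    have hres := DYAux.step (P := P) (𝒢.le n) h hh d (ΔW n) hWL2 hW0 hWcov
      (fun ω => Y1 n ω - Y2 n ω) (Y1 (n+1) - Y2 (n+1)) (fun ω => f1 n ω - f2 n ω)
      φ ψ (fun ω i => Z1 n ω i - Z2 n ω i)
      ((hY1L2 n (le_of_lt hn)).sub (hY2L2 n (le_of_lt hn)))
      ((hY1L2 _ hsucc).sub (hY2L2 _ hsucc))
      ((hf1L2 n hn).sub (hf2L2 n hn))
      hφL2 hψL2 hstepn hZeqn hfae k_y L_f L_v (ε n) lam hlam hlamLf hφbd hψbd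
    rw [hCdef]
    exact hres
  have hrec : ∀ n, n < N →
      (∫ ω, (Y1 n ω - Y2 n ω) ^ 2 ∂P)
        ≤ A * ((∫ ω, (Y1 (n+1) ω - Y2 (n+1) ω) ^ 2 ∂P) + C * ε n) := by
    intro n hn
    have h1 := key n hn
    have h2 := mul_le_mul_of_nonneg_left h1 hApos.le
    calc (∫ ω, (Y1 n ω - Y2 n ω) ^ 2 ∂P)
        = (A * (1 - h * (2 * k_y + lam))) * ∫ ω, (Y1 n ω - Y2 n ω) ^ 2 ∂P := by
          rw [hAD, one_mul]
      _ = A * ((1 - h * (2 * k_y + lam)) * ∫ ω, (Y1 n ω - Y2 n ω) ^ 2 ∂P) := by ring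
      _ ≤ A * ((∫ ω, (Y1 (n+1) ω - Y2 (n+1) ω) ^ 2 ∂P) + C * ε n) := h2
  have main : ∀ j : ℕ, ∀ n, n + j = N →
      (∫ ω, (Y1 n ω - Y2 n ω) ^ 2 ∂P)
        ≤ A ^ j * ((∫ ω, (Y1 N ω - Y2 N ω) ^ 2 ∂P) + j * (C * Mx)) := by
    intro j
    induction j with
    | zero =>
      intro n hn
      obtain rfl : n = N := by omega
      simp
    | succ j ih =>
      intro n hn
      have hnN : n < N := by omega
      have h1 := hrec n hnN
      have h2 := ih (n+1) (by omega)
      have h3 : C * ε n ≤ C * Mx := mul_le_mul_of_nonneg_left (hMxb n hnN) hC0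
      have h4 : (∫ ω, (Y1 n ω - Y2 n ω) ^ 2 ∂P)
          ≤ A * (A ^ j * ((∫ ω, (Y1 N ω - Y2 N ω) ^ 2 ∂P) + j * (C * Mx)) + C * Mx) := by
        refine h1.trans (mul_le_mul_of_nonneg_left ?_ hApos.le)
        linarith
      have h5 : A * (C * Mx) ≤ A ^ (j+1) * (C * Mx) :=
        mul_le_mul_of_nonneg_right (le_self_pow₀ hA1 (Nat.succ_ne_zero j))
          (mul_nonneg hC0 hMx0)
      calc (∫ ω, (Y1 n ω - Y2 n ω) ^ 2 ∂P)
          ≤ A * (A ^ j * ((∫ ω, (Y1 N ω - Y2 N ω) ^ 2 ∂P) + j * (C * Mx)) + C * Mx) := h4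
        _ = A ^ (j+1) * ((∫ ω, (Y1 N ω - Y2 N ω) ^ 2 ∂P) + j * (C * Mx)) + A * (C * Mx) := by
            ring
        _ ≤ A ^ (j+1) * ((∫ ω, (Y1 N ω - Y2 N ω) ^ 2 ∂P) + j * (C * Mx))
            + A ^ (j+1) * (C * Mx) := by linarith
        _ = A ^ (j+1) * ((∫ ω, (Y1 N ω - Y2 N ω) ^ 2 ∂P) + (↑(j+1)) * (C * Mx)) := by
            push_cast; ring
  intro n hn
  have hYN0 : 0 ≤ ∫ ω, (Y1 N ω - Y2 N ω) ^ 2 ∂P := integral_nonneg fun ω => sq_nonneg _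
  have t0 := main (N - n) n (by omega)
  have hXnn : 0 ≤ (∫ ω, (Y1 N ω - Y2 N ω) ^ 2 ∂P) + ((N - n : ℕ) : ℝ) * (C * Mx) :=
    add_nonneg hYN0 (mul_nonneg (Nat.cast_nonneg _) (mul_nonneg hC0 hMx0))
  have t1 : (∫ ω, (Y1 n ω - Y2 n ω) ^ 2 ∂P)
      ≤ A ^ N * ((∫ ω, (Y1 N ω - Y2 N ω) ^ 2 ∂P) + ((N - n : ℕ) : ℝ) * (C * Mx)) :=
    t0.trans (mul_le_mul_of_nonneg_right (pow_le_pow_right₀ hA1 (Nat.sub_le N n)) hXnn)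
  have t2 : A ^ N * ((∫ ω, (Y1 N ω - Y2 N ω) ^ 2 ∂P) + ((N - n : ℕ) : ℝ) * (C * Mx))
      ≤ A ^ N * ((∫ ω, (Y1 N ω - Y2 N ω) ^ 2 ∂P) + (N : ℝ) * (C * Mx)) := by
    refine mul_le_mul_of_nonneg_left ?_ (pow_nonneg hApos.le N)
    have hcast : ((N - n : ℕ) : ℝ) ≤ (N : ℝ) := Nat.cast_le.mpr (Nat.sub_le N n)
    have := mul_le_mul_of_nonneg_right hcast (mul_nonneg hC0 hMx0)
    linarith
  have t3 : A ^ N * ((∫ ω, (Y1 N ω - Y2 N ω) ^ 2 ∂P) + (N : ℝ) * (C * Mx))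
      = A ^ N * (∫ ω, (Y1 N ω - Y2 N ω) ^ 2 ∂P)
        + N * h * L_v * lam⁻¹ * A ^ N * Mx := by
    rw [hCdef]; ring
  linarith


end
end

section
/- Let (Y¹, Z¹) with drivers (f¹_n) and (Y², Z²) with drivers (f²_n) be two solutions of the generic discrete scheme whose driver differences satisfy the driver-difference assumption with parameters k_y ∈ ℝ, L_f > 0, L_v ≥ 0 and nonnegative reals (ε_n)_{0≤n<N}. Assume k_y + L_f ≥ 0 and h·(2k_y + 2L_f) < 1, and set A := (1 − h·(2k_y + 2L_f))⁻¹. Then Σ_{n=0}^{N−1} h·E[|δZ_n|²] ≤ (2 + 4·N·h·(k_y + L_f)·A^N)·E[(δY_N)²] + ( 2·(N·h)²·L_v·(k_y + L_f)·L_f⁻¹·A^N + N·h·L_v·L_f⁻¹ )·max_{0≤k<N} ε_k. -/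
open MeasureTheory Finset

noncomputable section

set_option linter.unusedSectionVars false

section Helpers
variable {Ω : Type} {m m0 : MeasurableSpace Ω} {P : Measure Ω} [IsProbabilityMeasure P]

variable {Ω : Type} {m m0 : MeasurableSpace Ω} {P : Measure Ω} [IsProbabilityMeasure P]

lemma mulL1 {f g : Ω → ℝ} (hf : MemLp f 2 P) (hg : MemLp g 2 P) :
    Integrable (fun ω => f ω * g ω) P := by
  have h : MemLp (f • g) 1 P := hg.smul hf (hpqr := ⟨by norm_num [ENNReal.inv_two_add_inv_two]⟩)
  rw [memLp_one_iff_integrable] at h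
  exact h

lemma int_pull (hm : m ≤ m0) {b g : Ω → ℝ} (hb : StronglyMeasurable[m] b)
    (hg : Integrable g P) (hbg : Integrable (fun ω => b ω * g ω) P) :
    ∫ ω, b ω * g ω ∂P = ∫ ω, b ω * (P[g|m]) ω ∂P := by
  have h1 : ∫ ω, b ω * g ω ∂P = ∫ ω, (P[fun ω => b ω * g ω|m]) ω ∂P :=
    (integral_condExp hm).symm
  have h2 : P[fun ω => b ω * g ω|m] =ᵐ[P] fun ω => b ω * (P[g|m]) ω := by
    have := condExp_mul_of_stronglyMeasurable_left hb (μ := P) (m := m) hbg hg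
    exact this
  rw [h1, integral_congr_ae h2]

lemma int_zero_mean (hm : m ≤ m0) {b g : Ω → ℝ} (hb : StronglyMeasurable[m] b)
    (hg : Integrable g P) (hbg : Integrable (fun ω => b ω * g ω) P)
    (hz : P[g|m] =ᵐ[P] 0) : ∫ ω, b ω * g ω ∂P = 0 := by
  rw [int_pull hm hb hg hbg]
  have : (fun ω => b ω * (P[g|m]) ω) =ᵐ[P] fun _ => 0 := by
    filter_upwards [hz] with ω h; simp [h]
  rw [integral_congr_ae this, integral_zero]

lemma zsum_bound (hm : m ≤ m0) {d : ℕ} {h : ℝ} (hh : 0 < h)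
    {M : Ω → ℝ} (hM : MemLp M 2 P)
    {W : Fin d → Ω → ℝ} (hW : ∀ i, MemLp (W i) 2 P)
    {ζ : Fin d → Ω → ℝ} (hζm : ∀ i, StronglyMeasurable[m] (ζ i))
    (hMW : ∀ i, P[fun ω => M ω * W i ω|m] =ᵐ[P] fun ω => h * ζ i ω)
    (hcov : ∀ i j, P[fun ω => W i ω * W j ω|m] =ᵐ[P] fun _ => if i = j then h else 0) :
    h * ∫ ω, ∑ i, (ζ i ω)^2 ∂P ≤ ∫ ω, (M ω)^2 ∂P := by
  classical
  set s : Ω → ℝ := fun ω => ∑ i, (ζ i ω)^2 with hs_def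
  have hs_meas : StronglyMeasurable[m] s :=
    Finset.stronglyMeasurable_fun_sum _ fun i _ => ((hζm i).pow 2)
  have hs_nonneg : ∀ ω, 0 ≤ s ω := fun ω => Finset.sum_nonneg fun i _ => sq_nonneg _
  have hM2 : Integrable (fun ω => (M ω)^2) P := hM.integrable_sq
  have hM2_nonneg : 0 ≤ ∫ ω, (M ω)^2 ∂P := integral_nonneg fun ω => sq_nonneg _
  -- truncated bound for every R : ℕ
  have key : ∀ R : ℕ, h * ∫ ω, (if s ω ≤ (R:ℝ) then s ω else 0) ∂P ≤ ∫ ω, (M ω)^2 ∂P := by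
    intro R
    set b : Fin d → Ω → ℝ := fun i ω => if s ω ≤ (R:ℝ) then ζ i ω else 0 with hb_def
    have hset : MeasurableSet[m] {ω | s ω ≤ (R:ℝ)} :=
      hs_meas.measurable measurableSet_Iic
    have hbm : ∀ i, StronglyMeasurable[m] (b i) := fun i =>
      (Measurable.ite hset (hζm i).measurable measurable_const).stronglyMeasurable
    have hb_bdd : ∀ i ω, ‖b i ω‖ ≤ Real.sqrt R := by
      intro i ω
      rw [Real.norm_eq_abs]
      by_cases hc : s ω ≤ (R:ℝ)
      · simp only [hb_def, if_pos hc]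
        have h1 : (ζ i ω)^2 ≤ (R:ℝ) := le_trans (Finset.single_le_sum
            (f := fun j => (ζ j ω)^2) (fun j _ => sq_nonneg _) (Finset.mem_univ i)) hc
        calc |ζ i ω| = Real.sqrt ((ζ i ω)^2) := (Real.sqrt_sq_eq_abs _).symm
          _ ≤ Real.sqrt R := Real.sqrt_le_sqrt h1
      · simp [hb_def, if_neg hc, Real.sqrt_nonneg]
    have hbtop : ∀ i, MemLp (b i) ⊤ P := fun i =>
      memLp_top_of_bound ((hbm i).mono hm).aestronglyMeasurable _ (ae_of_all _ (hb_bdd i))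
    have hbW2 : ∀ i, MemLp (fun ω => b i ω * W i ω) 2 P := fun i =>
      (hW i).smul (hbtop i)
    set g : Ω → ℝ := fun ω => ∑ i, b i ω * W i ω with hg_def
    have hg2 : MemLp g 2 P := memLp_finset_sum _ fun i _ => hbW2 i
    have hMW_int : ∀ i, Integrable (fun ω => M ω * W i ω) P := fun i => mulL1 hM (hW i)
    have hbMW : ∀ i, Integrable (fun ω => b i ω * (M ω * W i ω)) P := fun i =>
      (hMW_int i).bdd_mul ((hbm i).mono hm).aestronglyMeasurable (ae_of_all _ (hb_bdd i))
    -- E1 : ∫ M g = h * ∫ Σ b_i^2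
    have E1 : ∫ ω, M ω * g ω ∂P = h * ∫ ω, ∑ i, (b i ω)^2 ∂P := by
      have e1 : ∫ ω, M ω * g ω ∂P = ∑ i, ∫ ω, b i ω * (M ω * W i ω) ∂P := by
        rw [← integral_finset_sum _ fun i _ => hbMW i]
        refine integral_congr_ae (.of_forall fun ω => ?_)
        simp only [hg_def, Finset.mul_sum]
        exact Finset.sum_congr rfl fun i _ => by ring
      have e2 : ∀ i, ∫ ω, b i ω * (M ω * W i ω) ∂P = h * ∫ ω, (b i ω)^2 ∂P := by
        intro i
        rw [int_pull hm (hbm i) (hMW_int i) (hbMW i)]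
        have : (fun ω => b i ω * (P[fun ω => M ω * W i ω|m]) ω)
            =ᵐ[P] fun ω => h * (b i ω)^2 := by
          filter_upwards [hMW i] with ω hω
          rw [hω]
          by_cases hc : s ω ≤ (R:ℝ) <;> simp [hb_def, hc] <;> ring
        rw [integral_congr_ae this, integral_const_mul]
      rw [e1, Finset.sum_congr rfl fun i _ => e2 i, ← Finset.mul_sum,
        ← integral_finset_sum]
      intro i _
      exact (((hbtop i).mono_exponent le_top).integrable_sq)
    -- E2 : ∫ g^2 = h * ∫ Σ b_i^2
    have hbb_int : ∀ i j : Fin d, Integrable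
        (fun ω => (b i ω * b j ω) * (W i ω * W j ω)) P := fun i j =>
      (mulL1 (hW i) (hW j)).bdd_mul
        (((hbm i).mul (hbm j)).mono hm).aestronglyMeasurable
        (c := Real.sqrt R * Real.sqrt R) (ae_of_all _ fun ω => by
          rw [norm_mul]
          exact mul_le_mul (hb_bdd i ω) (hb_bdd j ω) (norm_nonneg _) (Real.sqrt_nonneg _))
    have E2 : ∫ ω, (g ω)^2 ∂P = h * ∫ ω, ∑ i, (b i ω)^2 ∂P := by
      have esum : ∫ ω, ∑ i, ∑ j, (b i ω * b j ω) * (W i ω * W j ω) ∂P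
          = ∑ i, ∑ j, ∫ ω, (b i ω * b j ω) * (W i ω * W j ω) ∂P := by
        rw [integral_finset_sum _ fun i _ => integrable_finset_sum _ fun j _ => hbb_int i j]
        exact Finset.sum_congr rfl fun i _ => integral_finset_sum _ fun j _ => hbb_int i j
      have e1 : ∫ ω, (g ω)^2 ∂P
          = ∑ i, ∑ j, ∫ ω, (b i ω * b j ω) * (W i ω * W j ω) ∂P := by
        rw [← esum]
        refine integral_congr_ae (.of_forall fun ω => ?_)
        simp only [hg_def, sq, Finset.sum_mul_sum]
        exact Finset.sum_congr rfl fun i _ => Finset.sum_congr rfl fun j _ => by ring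
      have e2 : ∀ i j, ∫ ω, (b i ω * b j ω) * (W i ω * W j ω) ∂P
          = if i = j then h * ∫ ω, (b i ω)^2 ∂P else 0 := by
        intro i j
        have hc2 : (fun ω => (b i ω * b j ω) * (P[fun ω => W i ω * W j ω|m]) ω)
            =ᵐ[P] fun ω => if i = j then h * (b i ω)^2 else 0 := by
          filter_upwards [hcov i j] with ω hω
          rw [hω]
          by_cases hij : i = j
          · subst hij; simp; ring
          · simp [hij]
        calc ∫ ω, (b i ω * b j ω) * (W i ω * W j ω) ∂P
            = ∫ ω, (b i ω * b j ω) * (P[fun ω => W i ω * W j ω|m]) ω ∂P :=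
              int_pull hm (b := fun ω => b i ω * b j ω)
                (g := fun ω => W i ω * W j ω) ((hbm i).mul (hbm j))
                (mulL1 (hW i) (hW j)) (hbb_int i j)
          _ = ∫ ω, (if i = j then h * (b i ω)^2 else 0) ∂P := integral_congr_ae hc2
          _ = if i = j then h * ∫ ω, (b i ω)^2 ∂P else 0 := by
              by_cases hij : i = j
              · subst hij
                simp only [if_pos rfl, eq_self_iff_true, if_true]
                exact integral_const_mul h _
              · simp [hij]
      rw [e1]
      rw [Finset.sum_congr rfl fun i _ => Finset.sum_congr rfl fun j _ => e2 i j]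
      have : ∀ i : Fin d, (∑ j, if i = j then h * ∫ ω, (b i ω)^2 ∂P else 0)
          = h * ∫ ω, (b i ω)^2 ∂P := fun i => by
        rw [Finset.sum_ite_eq _ i _]
        simp
      rw [Finset.sum_congr rfl fun i _ => this i, ← Finset.mul_sum, ← integral_finset_sum]
      intro i _
      exact (((hbtop i).mono_exponent le_top).integrable_sq)
    -- combine
    have hMg_int : Integrable (fun ω => M ω * g ω) P := mulL1 hM hg2
    have hg2_int : Integrable (fun ω => (g ω)^2) P := hg2.integrable_sq
    have hexp : ∫ ω, (M ω - g ω)^2 ∂P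
        = ∫ ω, (M ω)^2 ∂P - 2 * ∫ ω, M ω * g ω ∂P + ∫ ω, (g ω)^2 ∂P := by
      have : (fun ω => (M ω - g ω)^2)
          = fun ω => (M ω)^2 - 2 * (M ω * g ω) + (g ω)^2 := by
        funext ω; ring
      have hsub : Integrable (fun ω => (M ω)^2 - 2 * (M ω * g ω)) P := by
        have h2 := hM2.sub (hMg_int.const_mul 2)
        exact h2
      rw [this, integral_add hsub hg2_int,
        integral_sub hM2 (hMg_int.const_mul 2), integral_const_mul]
    have hpos : 0 ≤ ∫ ω, (M ω - g ω)^2 ∂P := integral_nonneg fun ω => sq_nonneg _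
    have hIb : ∫ ω, ∑ i, (b i ω)^2 ∂P = ∫ ω, (if s ω ≤ (R:ℝ) then s ω else 0) ∂P := by
      refine integral_congr_ae (.of_forall fun ω => ?_)
      by_cases hc : s ω ≤ (R:ℝ) <;> simp [hb_def, hc, hs_def]
    rw [hIb] at E1 E2
    linarith [hexp, hpos, E1, E2]
  -- monotone convergence
  set C : ℝ := h⁻¹ * ∫ ω, (M ω)^2 ∂P with hC_def
  have hC0 : 0 ≤ C := mul_nonneg (by positivity) hM2_nonneg
  have keyC : ∀ R : ℕ, ∫ ω, (if s ω ≤ (R:ℝ) then s ω else 0) ∂P ≤ C := by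
    intro R
    rw [hC_def]
    calc ∫ ω, (if s ω ≤ (R:ℝ) then s ω else 0) ∂P
        = h⁻¹ * (h * ∫ ω, (if s ω ≤ (R:ℝ) then s ω else 0) ∂P) := by
          field_simp
      _ ≤ h⁻¹ * ∫ ω, (M ω)^2 ∂P := by
          apply mul_le_mul_of_nonneg_left (key R)
          positivity
  suffices hfin : ∫ ω, s ω ∂P ≤ C by
    calc h * ∫ ω, s ω ∂P ≤ h * C := mul_le_mul_of_nonneg_left hfin hh.le
      _ = ∫ ω, (M ω)^2 ∂P := by rw [hC_def]; field_simp
  -- lintegral argument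
  have hs_m0 : Measurable (s : Ω → ℝ) := (hs_meas.measurable).mono hm le_rfl
  have ht_meas : ∀ R : ℕ, Measurable (fun ω => if s ω ≤ (R:ℝ) then s ω else 0) := fun R =>
    Measurable.ite (hs_m0 measurableSet_Iic) hs_m0 measurable_const
  have ht_int : ∀ R : ℕ, Integrable (fun ω => if s ω ≤ (R:ℝ) then s ω else 0) P := by
    intro R
    refine (memLp_top_of_bound (ht_meas R).aestronglyMeasurable (R:ℝ)
      (ae_of_all _ fun ω => ?_)).integrable le_top
    by_cases hc : s ω ≤ (R:ℝ)
    · simp only [if_pos hc, Real.norm_eq_abs, abs_of_nonneg (hs_nonneg ω)]; exact hc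
    · simp [if_neg hc]
  have ht_nonneg : ∀ R : ℕ, ∀ ω, 0 ≤ (if s ω ≤ (R:ℝ) then s ω else 0) := by
    intro R ω
    by_cases hc : s ω ≤ (R:ℝ) <;> simp [hc, hs_nonneg ω]
  have hlin : ∀ R : ℕ, (∫⁻ ω, ENNReal.ofReal (if s ω ≤ (R:ℝ) then s ω else 0) ∂P)
      = ENNReal.ofReal (∫ ω, (if s ω ≤ (R:ℝ) then s ω else 0) ∂P) :=
    fun R => (ofReal_integral_eq_lintegral_ofReal (ht_int R)
      (ae_of_all _ (ht_nonneg R))).symm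
  have hmono : Monotone fun (R : ℕ) (ω : Ω) =>
      ENNReal.ofReal (if s ω ≤ (R:ℝ) then s ω else 0) := by
    intro R R' hRR'
    intro ω
    refine ENNReal.ofReal_le_ofReal ?_
    by_cases hc : s ω ≤ (R:ℝ)
    · have hc' : s ω ≤ (R':ℝ) := le_trans hc (by exact_mod_cast hRR')
      simp [hc, hc']
    · simp only [if_neg hc]
      exact ht_nonneg R' ω
  have hsup : ∀ ω, (⨆ R : ℕ, ENNReal.ofReal (if s ω ≤ (R:ℝ) then s ω else 0))
      = ENNReal.ofReal (s ω) := by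
    intro ω
    apply le_antisymm
    · refine iSup_le fun R => ENNReal.ofReal_le_ofReal ?_
      by_cases hc : s ω ≤ (R:ℝ) <;> simp [hc, hs_nonneg ω]
    · have hR : s ω ≤ ((Nat.ceil (s ω) : ℕ) : ℝ) := Nat.le_ceil _
      have : ENNReal.ofReal (s ω)
          = ENNReal.ofReal (if s ω ≤ ((Nat.ceil (s ω) : ℕ) : ℝ) then s ω else 0) := by
        rw [if_pos hR]
      rw [this]
      exact le_iSup (fun R : ℕ => ENNReal.ofReal (if s ω ≤ (R:ℝ) then s ω else 0)) _
  have hMCT : (∫⁻ ω, ENNReal.ofReal (s ω) ∂P)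
      = ⨆ R : ℕ, ∫⁻ ω, ENNReal.ofReal (if s ω ≤ (R:ℝ) then s ω else 0) ∂P := by
    have hls := lintegral_iSup
      (f := fun (R : ℕ) (ω : Ω) => ENNReal.ofReal (if s ω ≤ (R:ℝ) then s ω else 0))
      (μ := P) (fun R => (ht_meas R).ennreal_ofReal) hmono
    rw [← hls]
    exact lintegral_congr fun ω => (hsup ω).symm
  have hbound : (∫⁻ ω, ENNReal.ofReal (s ω) ∂P) ≤ ENNReal.ofReal C := by
    rw [hMCT]
    refine iSup_le fun R => ?_
    rw [hlin R]
    exact ENNReal.ofReal_le_ofReal (keyC R)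
  have heq : ∫ ω, s ω ∂P = (∫⁻ ω, ENNReal.ofReal (s ω) ∂P).toReal :=
    integral_eq_lintegral_of_nonneg_ae (ae_of_all _ hs_nonneg)
      hs_m0.aestronglyMeasurable
  rw [heq]
  calc (∫⁻ ω, ENNReal.ofReal (s ω) ∂P).toReal
      ≤ (ENNReal.ofReal C).toReal := ENNReal.toReal_mono ENNReal.ofReal_ne_top hbound
    _ = C := ENNReal.toReal_ofReal hC0

lemma orth (hm : m ≤ m0) {Y : Ω → ℝ} (hY : MemLp Y 2 P) (hc2 : MemLp (P[Y|m]) 2 P) :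
    ∫ ω, ((P[Y|m]) ω)^2 ∂P + ∫ ω, (Y ω - (P[Y|m]) ω)^2 ∂P = ∫ ω, (Y ω)^2 ∂P := by
  set c : Ω → ℝ := P[Y|m] with hc_def
  have hM2 : MemLp (fun ω => Y ω - c ω) 2 P := by
    have := hY.sub hc2; exact this
  have hMint : Integrable (fun ω => Y ω - c ω) P := hM2.integrable one_le_two
  have hcM_int : Integrable (fun ω => c ω * (Y ω - c ω)) P := mulL1 hc2 hM2
  have hM0 : P[fun ω => Y ω - c ω|m] =ᵐ[P] 0 := by
    have h1 := condExp_sub (m := m) (hY.integrable one_le_two) (hc2.integrable one_le_two)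
      (μ := P) (f := Y) (g := c)
    have h2 : P[c|m] = c := condExp_of_stronglyMeasurable hm stronglyMeasurable_condExp
      (hc2.integrable one_le_two)
    have h3 : P[fun ω => Y ω - c ω|m] =ᵐ[P] P[Y - c|m] :=
      condExp_congr_ae (.of_forall fun ω => rfl)
    filter_upwards [h1, h3] with ω hω1 hω3
    simp only [Pi.zero_apply]
    rw [hω3, hω1, Pi.sub_apply, h2, hc_def, sub_self]
  have hzero : ∫ ω, c ω * (Y ω - c ω) ∂P = 0 := by
    have h1 : ∫ ω, c ω * (Y ω - c ω) ∂P
        = ∫ ω, (P[fun ω => c ω * (Y ω - c ω)|m]) ω ∂P := (integral_condExp hm).symm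
    have h2 : P[fun ω => c ω * (Y ω - c ω)|m]
        =ᵐ[P] fun ω => c ω * (P[fun ω => Y ω - c ω|m]) ω :=
      condExp_mul_of_stronglyMeasurable_left stronglyMeasurable_condExp hcM_int hMint
    rw [h1, integral_congr_ae h2]
    have : (fun ω => c ω * (P[fun ω => Y ω - c ω|m]) ω) =ᵐ[P] fun _ => (0:ℝ) := by
      filter_upwards [hM0] with ω hω
      simp only [hω, Pi.zero_apply, mul_zero]
    rw [integral_congr_ae this, integral_zero]
  have hexp : ∫ ω, (Y ω)^2 ∂P
      = ∫ ω, ((c ω)^2 + (2 * (c ω * (Y ω - c ω)) + (Y ω - c ω)^2)) ∂P := by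
    refine integral_congr_ae (.of_forall fun ω => ?_)
    ring
  have hint1 : Integrable (fun ω => (c ω)^2) P := hc2.integrable_sq
  have hint2 : Integrable (fun ω => (Y ω - c ω)^2) P := hM2.integrable_sq
  have hint3 : Integrable (fun ω => 2 * (c ω * (Y ω - c ω)) + (Y ω - c ω)^2) P := by
    have := (hcM_int.const_mul 2).add hint2; exact this
  rw [hexp, integral_add hint1 hint3,
    integral_add (hcM_int.const_mul 2) hint2, integral_const_mul, hzero]
  ring

lemma step_ineq (hm : m ≤ m0) {d : ℕ} {h k_y L_f L_v εn : ℝ} (hh : 0 < h) (hLf : 0 < L_f)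
    {X Y φ ψ : Ω → ℝ} {W ζ : Fin d → Ω → ℝ}
    (hX : MemLp X 2 P) (hY : MemLp Y 2 P) (hφ : MemLp φ 2 P) (hψ : MemLp ψ 2 P)
    (hc2 : MemLp (P[Y|m]) 2 P)
    (hW : ∀ i, MemLp (W i) 2 P) (hζm : ∀ i, StronglyMeasurable[m] (ζ i))
    (hW0 : ∀ i, P[W i|m] =ᵐ[P] 0)
    (hcov : ∀ i j, P[fun ω => W i ω * W j ω|m] =ᵐ[P] fun _ => if i = j then h else 0)
    (hζ : ∀ i, P[fun ω => Y ω * W i ω|m] =ᵐ[P] fun ω => h * ζ i ω)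
    (hXeq : X =ᵐ[P] fun ω => (P[Y|m]) ω + h * (φ ω + ψ ω))
    (hφX : ∫ ω, φ ω * X ω ∂P ≤ k_y * ∫ ω, (X ω)^2 ∂P)
    (hψ2 : ∫ ω, (ψ ω)^2 ∂P ≤ L_v * εn + L_f * ∫ ω, ∑ i, (ζ i ω)^2 ∂P) :
    (1 - h * (2 * k_y + 2 * L_f)) * ∫ ω, (X ω)^2 ∂P
      + (h / 2) * ∫ ω, ∑ i, (ζ i ω)^2 ∂P
      ≤ ∫ ω, (Y ω)^2 ∂P + h * L_v / (2 * L_f) * εn := by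
  set c : Ω → ℝ := P[Y|m] with hc_def
  have hM2 : MemLp (fun ω => Y ω - c ω) 2 P := by
    have := hY.sub hc2; exact this
  -- conditional expectation of M * W i
  have hMζ : ∀ i, P[fun ω => (Y ω - c ω) * W i ω|m] =ᵐ[P] fun ω => h * ζ i ω := by
    intro i
    have hYW : Integrable (fun ω => Y ω * W i ω) P := mulL1 hY (hW i)
    have hcW : Integrable (fun ω => c ω * W i ω) P := mulL1 hc2 (hW i)
    have e0 : P[fun ω => (Y ω - c ω) * W i ω|m]
        =ᵐ[P] P[(fun ω => Y ω * W i ω) - (fun ω => c ω * W i ω)|m] :=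
      condExp_congr_ae (.of_forall fun ω => by simp [Pi.sub_apply]; ring)
    have e1 := condExp_sub (m := m) (μ := P) hYW hcW
    have e2 : P[fun ω => c ω * W i ω|m] =ᵐ[P] fun ω => c ω * (P[W i|m]) ω :=
      condExp_mul_of_stronglyMeasurable_left stronglyMeasurable_condExp hcW
        ((hW i).integrable one_le_two)
    filter_upwards [e0, e1, e2, hW0 i, hζ i] with ω h0 h1 h2 h3 h4
    rw [h0, h1, Pi.sub_apply, h2, h3, Pi.zero_apply, mul_zero, sub_zero, h4]
  have hZM : h * ∫ ω, ∑ i, (ζ i ω)^2 ∂P ≤ ∫ ω, (Y ω - c ω)^2 ∂P :=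
    zsum_bound hm hh hM2 hW hζm hMζ hcov
  have horth : ∫ ω, (c ω)^2 ∂P + ∫ ω, (Y ω - c ω)^2 ∂P = ∫ ω, (Y ω)^2 ∂P :=
    orth hm hY hc2
  -- expansion of ∫ X^2
  have hXc_int : Integrable (fun ω => X ω * c ω) P := mulL1 hX hc2
  have hφX_int : Integrable (fun ω => φ ω * X ω) P := mulL1 hφ hX
  have hψX_int : Integrable (fun ω => ψ ω * X ω) P := mulL1 hψ hX
  have hXsq : Integrable (fun ω => (X ω)^2) P := hX.integrable_sq
  have hcsq : Integrable (fun ω => (c ω)^2) P := hc2.integrable_sq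
  have hψsq : Integrable (fun ω => (ψ ω)^2) P := hψ.integrable_sq
  have hXX : ∫ ω, (X ω)^2 ∂P = ∫ ω, X ω * c ω ∂P
      + h * ∫ ω, φ ω * X ω ∂P + h * ∫ ω, ψ ω * X ω ∂P := by
    have e : (fun ω => (X ω)^2) =ᵐ[P]
        fun ω => X ω * c ω + (h * (φ ω * X ω) + h * (ψ ω * X ω)) := by
      filter_upwards [hXeq] with ω hω
      rw [sq, hω]
      ring
    have hadd : Integrable (fun ω => h * (φ ω * X ω) + h * (ψ ω * X ω)) P := by
      have := (hφX_int.const_mul h).add (hψX_int.const_mul h); exact this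
    rw [integral_congr_ae e,
      integral_add hXc_int hadd,
      integral_add (hφX_int.const_mul h) (hψX_int.const_mul h),
      integral_const_mul, integral_const_mul]
    ring
  -- 2 ∫ X c ≤ ∫ X² + ∫ c²
  have hXc_bound : 2 * ∫ ω, X ω * c ω ∂P ≤ ∫ ω, (X ω)^2 ∂P + ∫ ω, (c ω)^2 ∂P := by
    have hpos : 0 ≤ ∫ ω, (X ω - c ω)^2 ∂P := integral_nonneg fun ω => sq_nonneg _
    have hsub : Integrable (fun ω => (X ω)^2 - 2 * (X ω * c ω)) P := by
      have := hXsq.sub (hXc_int.const_mul 2); exact this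
    have hexp : ∫ ω, (X ω - c ω)^2 ∂P
        = ∫ ω, (X ω)^2 ∂P - 2 * ∫ ω, X ω * c ω ∂P + ∫ ω, (c ω)^2 ∂P := by
      have e : (fun ω => (X ω - c ω)^2)
          = fun ω => ((X ω)^2 - 2 * (X ω * c ω)) + (c ω)^2 := by
        funext ω; ring
      rw [e, integral_add hsub hcsq, integral_sub hXsq (hXc_int.const_mul 2),
        integral_const_mul]
    linarith
  -- ∫ ψ X ≤ L_f ∫ X² + (1/(4 L_f)) ∫ ψ²
  have hψX_bound : ∫ ω, ψ ω * X ω ∂P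
      ≤ L_f * ∫ ω, (X ω)^2 ∂P + (∫ ω, (ψ ω)^2 ∂P) / (4 * L_f) := by
    have hpos : 0 ≤ ∫ ω, (2 * L_f * X ω - ψ ω)^2 ∂P := integral_nonneg fun ω => sq_nonneg _
    have hsub : Integrable (fun ω => 4 * L_f^2 * (X ω)^2 - 4 * L_f * (ψ ω * X ω)) P := by
      have := (hXsq.const_mul (4 * L_f^2)).sub (hψX_int.const_mul (4 * L_f)); exact this
    have hexp : ∫ ω, (2 * L_f * X ω - ψ ω)^2 ∂P
        = 4 * L_f^2 * ∫ ω, (X ω)^2 ∂P - 4 * L_f * ∫ ω, ψ ω * X ω ∂P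
          + ∫ ω, (ψ ω)^2 ∂P := by
      have e : (fun ω => (2 * L_f * X ω - ψ ω)^2)
          = fun ω => (4 * L_f^2 * (X ω)^2 - 4 * L_f * (ψ ω * X ω)) + (ψ ω)^2 := by
        funext ω; ring
      rw [e, integral_add hsub hψsq,
        integral_sub (hXsq.const_mul (4 * L_f^2)) (hψX_int.const_mul (4 * L_f)),
        integral_const_mul, integral_const_mul]
    have hineq : 4 * L_f * ∫ ω, ψ ω * X ω ∂P
        ≤ 4 * L_f^2 * ∫ ω, (X ω)^2 ∂P + ∫ ω, (ψ ω)^2 ∂P := by linarith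
    rw [← sub_nonneg]
    have expand : L_f * ∫ ω, (X ω)^2 ∂P + (∫ ω, (ψ ω)^2 ∂P) / (4 * L_f)
        - ∫ ω, ψ ω * X ω ∂P
        = (4 * L_f^2 * ∫ ω, (X ω)^2 ∂P + ∫ ω, (ψ ω)^2 ∂P
            - 4 * L_f * ∫ ω, ψ ω * X ω ∂P) / (4 * L_f) := by
      field_simp
    rw [expand]
    apply div_nonneg _ (by linarith)
    linarith
  -- scale hψX_bound by h
  have hq2 : h * ∫ ω, ψ ω * X ω ∂P
      ≤ h * L_f * ∫ ω, (X ω)^2 ∂P + h / (4 * L_f) * ∫ ω, (ψ ω)^2 ∂P := by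
    have h1 := mul_le_mul_of_nonneg_left hψX_bound hh.le
    have h2 : h * (L_f * ∫ ω, (X ω)^2 ∂P + (∫ ω, (ψ ω)^2 ∂P) / (4 * L_f))
        = h * L_f * ∫ ω, (X ω)^2 ∂P + h / (4 * L_f) * ∫ ω, (ψ ω)^2 ∂P := by
      field_simp
    linarith [h1, h2.le, h2.ge]
  have hp2 : h * ∫ ω, φ ω * X ω ∂P ≤ h * k_y * ∫ ω, (X ω)^2 ∂P := by
    have h1 := mul_le_mul_of_nonneg_left hφX hh.le
    calc h * ∫ ω, φ ω * X ω ∂P ≤ h * (k_y * ∫ ω, (X ω)^2 ∂P) := h1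
      _ = h * k_y * ∫ ω, (X ω)^2 ∂P := by ring
  -- scale hψ2 by h/(4 L_f)
  have hv2 : h / (4 * L_f) * ∫ ω, (ψ ω)^2 ∂P
      ≤ h * L_v / (4 * L_f) * εn + h / 4 * ∫ ω, ∑ i, (ζ i ω)^2 ∂P := by
    have hpos : (0:ℝ) ≤ h / (4 * L_f) := by positivity
    have h1 := mul_le_mul_of_nonneg_left hψ2 hpos
    have h2 : h / (4 * L_f) * (L_v * εn + L_f * ∫ ω, ∑ i, (ζ i ω)^2 ∂P)
        = h * L_v / (4 * L_f) * εn + h / 4 * ∫ ω, ∑ i, (ζ i ω)^2 ∂P := by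
      field_simp
    linarith [h1, h2.le, h2.ge]
  have hgoalc : h * L_v / (2 * L_f) * εn = 2 * (h * L_v / (4 * L_f) * εn) := by
    field_simp
    ring
  linarith [hXX, hXc_bound, hp2, hq2, hv2, hZM, horth, hgoalc]

end Helpers

lemma gronwall_alg (N : ℕ) (hN : 1 ≤ N) (h k_y L_f L_v A e : ℝ)
    (hh : 0 < h) (hLf : 0 < L_f) (hLv : 0 ≤ L_v)
    (hkyLf : 0 ≤ k_y + L_f) (hsmall : h * (2 * k_y + 2 * L_f) < 1)
    (hA : A = (1 - h * (2 * k_y + 2 * L_f))⁻¹)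
    (u z εs : ℕ → ℝ) (hu0 : ∀ n, 0 ≤ u n) (hz0 : ∀ n, n < N → 0 ≤ z n)
    (he0 : 0 ≤ e) (hεe : ∀ k, k < N → εs k ≤ e)
    (key : ∀ n, n < N → (1 - h * (2 * k_y + 2 * L_f)) * u n + (h / 2) * z n
      ≤ u (n + 1) + h * L_v / (2 * L_f) * εs n) :
    ∑ n ∈ Finset.range N, h * z n
      ≤ (2 + 4 * N * h * (k_y + L_f) * A ^ N) * u N
        + (2 * (N * h) ^ 2 * L_v * (k_y + L_f) * L_f⁻¹ * A ^ N
            + N * h * L_v * L_f⁻¹) * e := by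
  set B : ℝ := h * (2 * k_y + 2 * L_f) with hB_def
  have hB0 : 0 ≤ B := by
    have : (0:ℝ) ≤ 2 * k_y + 2 * L_f := by linarith
    exact mul_nonneg hh.le this
  have hB1 : B < 1 := hsmall
  have hApos : 0 < A := by rw [hA]; exact inv_pos.2 (by linarith)
  have hAB : (1 - B) * A = 1 := by
    rw [hA]
    exact mul_inv_cancel₀ (by linarith)
  have hA1 : 1 ≤ A := by nlinarith
  set C : ℝ := h * L_v / (2 * L_f) with hC_def
  have hC0 : 0 ≤ C := by positivity
  have hCe : 0 ≤ C * e := mul_nonneg hC0 he0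
  -- downward bound on u
  have ubd : ∀ k n, n + k = N → u n ≤ A ^ k * u N + (k:ℝ) * A ^ k * C * e := by
    intro k
    induction k with
    | zero =>
      intro n hn
      simp only [Nat.add_zero] at hn
      subst hn
      simp
    | succ k IH =>
      intro n hn
      have hnN : n < N := by omega
      have hIH := IH (n + 1) (by omega)
      have hk := key n hnN
      have hz := hz0 n hnN
      have hε := hεe n hnN
      have h1 : (1 - B) * u n ≤ u (n + 1) + C * e := by
        have : C * εs n ≤ C * e := mul_le_mul_of_nonneg_left hε hC0
        rw [hB_def, hC_def] at *
        nlinarith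
      have h2 : u n ≤ A * (u (n + 1) + C * e) := by
        have h3 : u n = ((1 - B) * A) * u n := by rw [hAB]; ring
        rw [h3]
        have h4 : (1 - B) * A * u n = A * ((1 - B) * u n) := by ring
        rw [h4]
        exact mul_le_mul_of_nonneg_left h1 hApos.le
      have h5 : A * (u (n + 1) + C * e)
          ≤ A * ((A ^ k * u N + (k:ℝ) * A ^ k * C * e) + C * e) :=
        mul_le_mul_of_nonneg_left (by linarith) hApos.le
      have h6 : A * ((A ^ k * u N + (k:ℝ) * A ^ k * C * e) + C * e)
          = A ^ (k+1) * u N + (k:ℝ) * A ^ (k+1) * C * e + A * (C * e) := by ring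
      have h7 : A * (C * e) ≤ A ^ (k+1) * (C * e) := by
        have := le_self_pow₀ hA1 (Nat.succ_ne_zero k)
        exact mul_le_mul_of_nonneg_right this hCe
      have h8 : A ^ (k+1) * u N + (k:ℝ) * A ^ (k+1) * C * e + A ^ (k+1) * (C * e)
          = A ^ (k+1) * u N + ((k:ℝ) + 1) * A ^ (k+1) * C * e := by ring
      push_cast
      linarith
  have unbd : ∀ n, n ≤ N → u n ≤ A ^ N * u N + (N:ℝ) * A ^ N * C * e := by
    intro n hn
    have h1 := ubd (N - n) n (by omega)
    have h2 : A ^ (N - n) ≤ A ^ N := pow_le_pow_right₀ hA1 (Nat.sub_le N n)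
    have h3 : ((N - n : ℕ):ℝ) ≤ (N:ℝ) := by
      exact_mod_cast Nat.sub_le N n
    have h4 : A ^ (N - n) * u N ≤ A ^ N * u N := mul_le_mul_of_nonneg_right h2 (hu0 N)
    have h5 : ((N - n : ℕ):ℝ) * A ^ (N - n) * C * e ≤ (N:ℝ) * A ^ N * C * e := by
      have hApow : (0:ℝ) ≤ A ^ (N - n) := pow_nonneg hApos.le _
      have hN0 : (0:ℝ) ≤ ((N - n : ℕ):ℝ) := Nat.cast_nonneg _
      have : ((N - n : ℕ):ℝ) * A ^ (N - n) ≤ (N:ℝ) * A ^ N :=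
        mul_le_mul h3 h2 hApow (Nat.cast_nonneg _)
      calc ((N - n : ℕ):ℝ) * A ^ (N - n) * C * e
          = (((N - n : ℕ):ℝ) * A ^ (N - n)) * (C * e) := by ring
        _ ≤ ((N:ℝ) * A ^ N) * (C * e) := mul_le_mul_of_nonneg_right this hCe
        _ = (N:ℝ) * A ^ N * C * e := by ring
    linarith
  -- summation
  have sum1 : ∑ n ∈ Finset.range N, h * z n
      ≤ 2 * (u N - u 0) + 2 * B * (∑ n ∈ Finset.range N, u n)
        + 2 * C * (∑ n ∈ Finset.range N, εs n) := by
    have hterm : ∀ n ∈ Finset.range N,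
        h * z n ≤ 2 * (u (n+1) - u n) + 2 * B * u n + 2 * C * εs n := by
      intro n hn
      have := key n (Finset.mem_range.1 hn)
      linarith
    calc ∑ n ∈ Finset.range N, h * z n
        ≤ ∑ n ∈ Finset.range N, (2 * (u (n+1) - u n) + 2 * B * u n + 2 * C * εs n) :=
          Finset.sum_le_sum hterm
      _ = 2 * (u N - u 0) + 2 * B * (∑ n ∈ Finset.range N, u n)
          + 2 * C * (∑ n ∈ Finset.range N, εs n) := by
          rw [Finset.sum_add_distrib, Finset.sum_add_distrib, ← Finset.mul_sum,
            ← Finset.mul_sum, ← Finset.mul_sum, Finset.sum_range_sub (f := u)]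
  have sumu : ∑ n ∈ Finset.range N, u n
      ≤ (N:ℝ) * (A ^ N * u N + (N:ℝ) * A ^ N * C * e) := by
    calc ∑ n ∈ Finset.range N, u n
        ≤ ∑ _n ∈ Finset.range N, (A ^ N * u N + (N:ℝ) * A ^ N * C * e) :=
          Finset.sum_le_sum fun n hn => unbd n (le_of_lt (Finset.mem_range.1 hn))
      _ = (N:ℝ) * (A ^ N * u N + (N:ℝ) * A ^ N * C * e) := by
          rw [Finset.sum_const, Finset.card_range, nsmul_eq_mul]
  have sumε : ∑ n ∈ Finset.range N, εs n ≤ (N:ℝ) * e := by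
    calc ∑ n ∈ Finset.range N, εs n ≤ ∑ _n ∈ Finset.range N, e :=
        Finset.sum_le_sum fun n hn => hεe n (Finset.mem_range.1 hn)
      _ = (N:ℝ) * e := by rw [Finset.sum_const, Finset.card_range, nsmul_eq_mul]
  have t1 : 2 * B * (∑ n ∈ Finset.range N, u n)
      ≤ 2 * B * ((N:ℝ) * (A ^ N * u N + (N:ℝ) * A ^ N * C * e)) :=
    mul_le_mul_of_nonneg_left sumu (by linarith)
  have t2 : 2 * C * (∑ n ∈ Finset.range N, εs n) ≤ 2 * C * ((N:ℝ) * e) :=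
    mul_le_mul_of_nonneg_left sumε (by linarith)
  have hfinal : 2 * u N + 2 * B * ((N:ℝ) * (A ^ N * u N + (N:ℝ) * A ^ N * C * e))
      + 2 * C * ((N:ℝ) * e)
      = (2 + 4 * N * h * (k_y + L_f) * A ^ N) * u N
        + (2 * (N * h) ^ 2 * L_v * (k_y + L_f) * L_f⁻¹ * A ^ N
            + N * h * L_v * L_f⁻¹) * e := by
    rw [hB_def, hC_def]
    field_simp
    ring
  linarith [hu0 0, sum1, t1, t2]


/-- Bound for the cumulative control error: if `k_y + L_f ≥ 0` and
`h·(2k_y + 2L_f) < 1`, then with `A = (1 − h·(2k_y + 2L_f))⁻¹`,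
`Σ_{n<N} h·E[|δZ_n|²] ≤ (2 + 4·N·h·(k_y + L_f)·A^N)·E[(δY_N)²]
  + (2·(N·h)²·L_v·(k_y + L_f)·L_f⁻¹·A^N + N·h·L_v·L_f⁻¹)·max_{k<N} ε_k`. -/
theorem deltaZ_bound_discrete_scheme
    {Ω : Type} [MeasurableSpace Ω] (P : Measure Ω) [IsProbabilityMeasure P]
    (N : ℕ) (hN : 1 ≤ N) (h : ℝ) (hh : 0 < h) (d : ℕ) (hd : 1 ≤ d)
    (𝒢 : Filtration ℕ (inferInstance : MeasurableSpace Ω))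
    (ΔW : ℕ → Ω → Fin d → ℝ)
    (Y1 Y2 : ℕ → Ω → ℝ) (Z1 Z2 : ℕ → Ω → Fin d → ℝ) (f1 f2 : ℕ → Ω → ℝ)
    (k_y L_f L_v : ℝ) (hLf : 0 < L_f) (hLv : 0 ≤ L_v) (ε : ℕ → ℝ)
    (hε : ∀ n < N, 0 ≤ ε n)
    (hInc : IncrementsOK P N d h 𝒢 ΔW)
    (hSol1 : SolvesScheme P N d h 𝒢 ΔW Y1 Z1 f1)
    (hSol2 : SolvesScheme P N d h 𝒢 ΔW Y2 Z2 f2)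
    (hDrv : DriverDiff P N d 𝒢 k_y L_f L_v ε Y1 Y2 Z1 Z2 f1 f2)
    (hkyLf : 0 ≤ k_y + L_f)
    (hsmall : h * (2 * k_y + 2 * L_f) < 1)
    (A : ℝ) (hA : A = (1 - h * (2 * k_y + 2 * L_f))⁻¹) :
    ∑ n ∈ Finset.range N, h * ∫ ω, (∑ i, (Z1 n ω i - Z2 n ω i) ^ 2) ∂P
      ≤ (2 + 4 * N * h * (k_y + L_f) * A ^ N)
          * (∫ ω, (Y1 N ω - Y2 N ω) ^ 2 ∂P)
        + (2 * (N * h) ^ 2 * L_v * (k_y + L_f) * L_f⁻¹ * A ^ N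
            + N * h * L_v * L_f⁻¹)
          * (Finset.range N).sup'
              (nonempty_range_iff.mpr (Nat.one_le_iff_ne_zero.mp hN)) ε := by
  have hm : ∀ n : ℕ, 𝒢 n ≤ (inferInstance : MeasurableSpace Ω) := fun n => 𝒢.le n
  obtain ⟨hY1L2, hY1m, hf1L2, hf1m, hY1e, hZ1e⟩ := hSol1
  obtain ⟨hY2L2, hY2m, hf2L2, hf2m, hY2e, hZ2e⟩ := hSol2
  have key : ∀ n, n < N →
      (1 - h * (2 * k_y + 2 * L_f)) * (∫ ω, (Y1 n ω - Y2 n ω)^2 ∂P)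
        + (h / 2) * (∫ ω, ∑ i, (Z1 n ω i - Z2 n ω i)^2 ∂P)
      ≤ (∫ ω, (Y1 (n+1) ω - Y2 (n+1) ω)^2 ∂P) + h * L_v / (2 * L_f) * ε n := by
    intro n hn
    obtain ⟨hWm, hWL2, hW0, hcov⟩ := hInc n hn
    obtain ⟨φ, ψ, hφm, hψm, hφ2, hψ2, hsplit, hφX, hψb⟩ := hDrv n hn
    have hnN : n ≤ N := hn.le
    have hn1N : n + 1 ≤ N := hn
    set ζ : Fin d → Ω → ℝ := fun i ω =>
      h⁻¹ * (P[fun ω' => (Y1 (n+1) ω' - Y2 (n+1) ω') * ΔW n ω' i|𝒢 n]) ω with hζ_def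
    have hYd2 : MemLp (fun ω => Y1 (n+1) ω - Y2 (n+1) ω) 2 P := by
      have := (hY1L2 _ hn1N).sub (hY2L2 _ hn1N); exact this
    have hX2 : MemLp (fun ω => Y1 n ω - Y2 n ω) 2 P := by
      have := (hY1L2 _ hnN).sub (hY2L2 _ hnN); exact this
    have hY1Wint : ∀ i, Integrable (fun ω => Y1 (n+1) ω * ΔW n ω i) P :=
      fun i => mulL1 (hY1L2 _ hn1N) (hWL2 i)
    have hY2Wint : ∀ i, Integrable (fun ω => Y2 (n+1) ω * ΔW n ω i) P :=
      fun i => mulL1 (hY2L2 _ hn1N) (hWL2 i)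
    have hsub_cond : ∀ i, P[fun ω => (Y1 (n+1) ω - Y2 (n+1) ω) * ΔW n ω i|𝒢 n]
        =ᵐ[P] fun ω => (P[fun ω' => Y1 (n+1) ω' * ΔW n ω' i|𝒢 n]) ω
          - (P[fun ω' => Y2 (n+1) ω' * ΔW n ω' i|𝒢 n]) ω := by
      intro i
      have h0 : P[fun ω => (Y1 (n+1) ω - Y2 (n+1) ω) * ΔW n ω i|𝒢 n]
          =ᵐ[P] P[(fun ω => Y1 (n+1) ω * ΔW n ω i)
            - (fun ω => Y2 (n+1) ω * ΔW n ω i)|𝒢 n] :=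
        condExp_congr_ae (.of_forall fun ω => by simp [Pi.sub_apply]; ring)
      have h1 := condExp_sub (m := 𝒢 n) (μ := P) (hY1Wint i) (hY2Wint i)
      filter_upwards [h0, h1] with ω e0 e1
      rw [e0, e1, Pi.sub_apply]
    have hζae : ∀ i, (fun ω => Z1 n ω i - Z2 n ω i) =ᵐ[P] ζ i := by
      intro i
      filter_upwards [hZ1e n hn i, hZ2e n hn i, hsub_cond i] with ω e1 e2 e3
      simp only [hζ_def]
      rw [e1, e2, e3]
      ring
    have hzζ : (∫ ω, ∑ i, (Z1 n ω i - Z2 n ω i)^2 ∂P)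
        = ∫ ω, ∑ i, (ζ i ω)^2 ∂P := by
      have hall : ∀ᵐ ω ∂P, ∀ i, Z1 n ω i - Z2 n ω i = ζ i ω :=
        ae_all_iff.2 fun i => hζae i
      refine integral_congr_ae ?_
      filter_upwards [hall] with ω hω
      exact Finset.sum_congr rfl fun i _ => by rw [hω i]
    have hζm : ∀ i, StronglyMeasurable[𝒢 n] (ζ i) := fun i =>
      stronglyMeasurable_const.mul stronglyMeasurable_condExp
    have hζeq : ∀ i, P[fun ω => (Y1 (n+1) ω - Y2 (n+1) ω) * ΔW n ω i|𝒢 n]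
        =ᵐ[P] fun ω => h * ζ i ω :=
      fun i => .of_forall fun ω => (mul_inv_cancel_left₀ hh.ne' _).symm
    have hcd1 : P[fun ω => Y1 (n+1) ω - Y2 (n+1) ω|𝒢 n]
        =ᵐ[P] fun ω => (P[Y1 (n+1)|𝒢 n]) ω - (P[Y2 (n+1)|𝒢 n]) ω := by
      have h0 : P[fun ω => Y1 (n+1) ω - Y2 (n+1) ω|𝒢 n]
          =ᵐ[P] P[Y1 (n+1) - Y2 (n+1)|𝒢 n] :=
        condExp_congr_ae (.of_forall fun ω => rfl)
      have h1 := condExp_sub (m := 𝒢 n) (μ := P)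
        ((hY1L2 _ hn1N).integrable one_le_two) ((hY2L2 _ hn1N).integrable one_le_two)
      filter_upwards [h0, h1] with ω e0 e1
      rw [e0, e1, Pi.sub_apply]
    have hcd : P[fun ω => Y1 (n+1) ω - Y2 (n+1) ω|𝒢 n]
        =ᵐ[P] fun ω => (Y1 n ω - h * f1 n ω) - (Y2 n ω - h * f2 n ω) := by
      filter_upwards [hcd1, hY1e n hn, hY2e n hn] with ω e1 e2 e3
      rw [e1]
      rw [e2, e3]
      ring
    have hc2 : MemLp (P[fun ω => Y1 (n+1) ω - Y2 (n+1) ω|𝒢 n]) 2 P := by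
      have hG : MemLp (fun ω => (Y1 n ω - h * f1 n ω) - (Y2 n ω - h * f2 n ω)) 2 P := by
        have := ((hY1L2 n hnN).sub ((hf1L2 n hn).const_mul h)).sub
          ((hY2L2 n hnN).sub ((hf2L2 n hn).const_mul h))
        exact this
      exact MemLp.ae_eq hcd.symm hG
    have hXeq : (fun ω => Y1 n ω - Y2 n ω) =ᵐ[P]
        fun ω => (P[fun ω => Y1 (n+1) ω - Y2 (n+1) ω|𝒢 n]) ω + h * (φ ω + ψ ω) := by
      filter_upwards [hcd, hY1e n hn, hY2e n hn, hsplit] with ω e1 e2 e3 e4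
      rw [e1, e2, e3, ← e4]
      ring
    have hψb' : ∫ ω, (ψ ω)^2 ∂P ≤ L_v * ε n + L_f * ∫ ω, ∑ i, (ζ i ω)^2 ∂P := by
      rw [← hzζ]; exact hψb
    have hstep := step_ineq (hm n) hh hLf hX2 hYd2 hφ2 hψ2 hc2
      (fun i => hWL2 i) hζm (fun i => hW0 i) hcov hζeq hXeq hφX hψb'
    rw [hzζ]
    exact hstep
  exact gronwall_alg N hN h k_y L_f L_v A
    ((Finset.range N).sup' (nonempty_range_iff.mpr (Nat.one_le_iff_ne_zero.mp hN)) ε)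
    hh hLf hLv hkyLf hsmall hA
    (fun n => ∫ ω, (Y1 n ω - Y2 n ω)^2 ∂P)
    (fun n => ∫ ω, ∑ i, (Z1 n ω i - Z2 n ω i)^2 ∂P) ε
    (fun n => integral_nonneg fun ω => sq_nonneg _)
    (fun n _ => integral_nonneg fun ω => Finset.sum_nonneg fun i _ => sq_nonneg _)
    (le_trans (hε 0 hN) (Finset.le_sup' ε (Finset.mem_range.2 hN)))
    (fun k hk => Finset.le_sup' ε (Finset.mem_range.2 hk))
    key

end
end
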